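/- arXiv:2208.05656 — 5 statements merged into one kernel-verified Lean document; each statement's English description precedes it below -/
import Mathlib

section
/- Let P, Q be Borel probability measures on ℝ^T with finite p-th moment (1 < p < ∞) and let π be a causal coupling between P and Q (i.e., conditionally on X_1,...,X_t, the variables Y_1,...,Y_t are independent of X_{t+1},...,X_T under π). Then for every δ > 0 there exists a map Y^δ : ℝ^T × ℝ^T → ℝ^T such that for each t ∈ {1,...,T}: Y^δ_t is measurable with respect to σ(X_1,...,X_t,Y_1,...,Y_t), X_t is σ(Y^δ_t)-measurable, and |Y^δ_t − Y_t| ≤ δ pointwise. In particular π^δ := (X,Y^δ)_*π is a bicausal coupling between P and Q^δ := Y^δ_*π. -/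
open MeasureTheory ProbabilityTheory Filter Set

noncomputable section

abbrev PathSp (T : ℕ) := Fin T → ℝ

/-- σ-algebra generated by the first `t` coordinates `X_1,…,X_t` on path space. -/
def FX (T t : ℕ) : MeasurableSpace (PathSp T) :=
  ⨆ i : Fin T, ⨆ _ : (i : ℕ) < t, MeasurableSpace.comap (fun x => x i) inferInstance

def prodX (T t : ℕ) : MeasurableSpace (PathSp T × PathSp T) := (FX T t).comap Prod.fst

def prodY (T t : ℕ) : MeasurableSpace (PathSp T × PathSp T) := (FX T t).comap Prod.snd

def prodXY (T t : ℕ) : MeasurableSpace (PathSp T × PathSp T) := prodX T t ⊔ prodY T t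

def IsCoupling {T : ℕ} (π : Measure (PathSp T × PathSp T)) (P Q : Measure (PathSp T)) : Prop :=
  π.map Prod.fst = P ∧ π.map Prod.snd = Q

/-- Causality of a coupling: conditionally on `X_1,…,X_t`, the variables `Y_1,…,Y_t`
are independent of `X_1,…,X_T`. -/
def Causal (T : ℕ) (π : Measure (PathSp T × PathSp T)) : Prop :=
  ∀ t ≤ T, ∀ A : Set (PathSp T), MeasurableSet[FX T t] A →
    (π[fun z => A.indicator (fun _ => (1:ℝ)) z.2 | prodX T T]) =ᵐ[π]
    (π[fun z => A.indicator (fun _ => (1:ℝ)) z.2 | prodX T t])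

def Bicausal (T : ℕ) (π : Measure (PathSp T × PathSp T)) : Prop :=
  Causal T π ∧ ∀ t ≤ T, ∀ A : Set (PathSp T), MeasurableSet[FX T t] A →
    (π[fun z => A.indicator (fun _ => (1:ℝ)) z.1 | prodY T T]) =ᵐ[π]
    (π[fun z => A.indicator (fun _ => (1:ℝ)) z.1 | prodY T t])

/-- `P` has a finite `p`-th moment. -/
def FiniteMoment {T : ℕ} (p : ℝ) (P : Measure (PathSp T)) : Prop :=
  ∀ t : Fin T, MemLp (fun x => x t) (ENNReal.ofReal p) P

/-- The adapted Wasserstein distance of order `p`. -/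
def AW (T : ℕ) (p : ℝ) (P Q : Measure (PathSp T)) : ℝ :=
  sInf { r | ∃ π : Measure (PathSp T × PathSp T), IsCoupling π P Q ∧ Bicausal T π ∧
    r = (∑ t : Fin T, ∫ z, |z.1 t - z.2 t| ^ p ∂π) ^ (1 / p) }

/-- The closed ball of radius `r` around `P` in the adapted Wasserstein distance,
within the set of probability measures with finite `p`-th moment. -/
def AWball (T : ℕ) (p : ℝ) (P : Measure (PathSp T)) (r : ℝ) : Set (Measure (PathSp T)) :=
  { Q | IsProbabilityMeasure Q ∧ FiniteMoment p Q ∧ AW T p P Q ≤ r }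

/-- Partial derivative `∂_{x_t} f`. -/
def pd {T : ℕ} (f : PathSp T → ℝ) (x : PathSp T) (t : Fin T) : ℝ :=
  fderiv ℝ f x (Pi.single t 1)

namespace CausalAux

open MeasurableSpace

/-- Transfer of conditional expectation along a pushforward. -/
theorem condexp_map_comp {α β : Type*} {m : MeasurableSpace β}
    {mα : MeasurableSpace α} {mβ : MeasurableSpace β}
    (μ : Measure α) [IsFiniteMeasure μ] {Φ : α → β} (hΦ : Measurable Φ)
    [IsFiniteMeasure (μ.map Φ)]
    (hm : m ≤ mβ) {f : β → ℝ}
    (hf : Integrable f (μ.map Φ)) :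
    (fun x => ((μ.map Φ)[f|m]) (Φ x)) =ᵐ[μ] μ[fun x => f (Φ x) | m.comap Φ] := by
  have hΦae : AEMeasurable Φ μ := hΦ.aemeasurable
  have hm0 : m.comap Φ ≤ mα := (comap_mono hm).trans hΦ.comap_le
  have hΦm : @Measurable α β (m.comap Φ) m Φ := Measurable.of_comap_le le_rfl
  have hcm : AEStronglyMeasurable ((μ.map Φ)[f|m]) (μ.map Φ) :=
    (stronglyMeasurable_condExp.mono hm).aestronglyMeasurable
  refine ae_eq_condExp_of_forall_setIntegral_eq hm0
    ((integrable_map_measure hf.aestronglyMeasurable hΦae).mp hf)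
    (fun s _ _ => ((integrable_map_measure hcm hΦae).mp integrable_condExp).integrableOn)
    (fun s hs _ => ?_) (StronglyMeasurable.aestronglyMeasurable
      (stronglyMeasurable_condExp.comp_measurable hΦm))
  obtain ⟨S, hS, rfl⟩ := hs
  rw [← setIntegral_map (hm S hS) hcm hΦae, ← setIntegral_map (hm S hS) hf.aestronglyMeasurable hΦae,
    setIntegral_condExp hm hf hS]

/-- Pull-out identity for integrals against conditional expectations. -/
theorem integral_mul_condexp {α : Type*} {m mα : MeasurableSpace α}
    (μ : Measure α) [IsFiniteMeasure μ]
    (hm : m ≤ mα) {v w : α → ℝ} (hv : StronglyMeasurable[m] v)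
    (hvw : Integrable (fun x => v x * w x) μ) (hw : Integrable w μ) :
    ∫ x, v x * w x ∂μ = ∫ x, v x * (μ[w|m]) x ∂μ := by
  rw [← integral_condExp hm (f := fun x => v x * w x)]
  exact integral_congr_ae (condExp_mul_of_stronglyMeasurable_left hv hvw hw)

end CausalAux

set_option maxHeartbeats 1000000

/-- a causal coupling can be modified into a bicausal one: for every
δ > 0 there is Yδ with Yδ_t being ℱ_t^{X,Y}-measurable, X_t being σ(Yδ_t)-measurable,
|Yδ_t - Y_t| ≤ δ, and (X,Yδ)_*π a bicausal coupling between P and Yδ_*π. -/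
theorem causal_to_bicausal_approx
    (T : ℕ) (p : ℝ) (hp : 1 < p)
    (P Q : Measure (PathSp T)) [IsProbabilityMeasure P] [IsProbabilityMeasure Q]
    (hPm : FiniteMoment p P) (hQm : FiniteMoment p Q)
    (π : Measure (PathSp T × PathSp T)) [IsProbabilityMeasure π]
    (hπ : IsCoupling π P Q) (hcausal : Causal T π)
    (δ : ℝ) (hδ : 0 < δ) :
    ∃ Yδ : PathSp T × PathSp T → PathSp T,
      Measurable Yδ ∧
      (∀ t : Fin T, Measurable[prodXY T ((t : ℕ) + 1)] fun z => Yδ z t) ∧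
      (∀ t : Fin T, ∃ ρ : ℝ → ℝ, Measurable ρ ∧ ∀ z, ρ (Yδ z t) = z.1 t) ∧
      (∀ t : Fin T, ∀ z, |Yδ z t - z.2 t| ≤ δ) ∧
      IsCoupling (π.map fun z => (z.1, Yδ z)) P (π.map Yδ) ∧
      Bicausal T (π.map fun z => (z.1, Yδ z)) := by
  classical
  have hπ0 : (0:ℝ) < Real.pi := Real.pi_pos
  have hδ0 : δ ≠ 0 := ne_of_gt hδ
  set ψ : ℝ → ℝ := fun x => 1/2 + Real.arctan x / Real.pi with hψdef
  have hψ0 : ∀ x, 0 ≤ ψ x := by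
    intro x
    have h := Real.neg_pi_div_two_lt_arctan x
    have h2 : -(1/2) < Real.arctan x / Real.pi := by
      rw [lt_div_iff₀ hπ0]; nlinarith
    simp only [hψdef]; linarith
  have hψ1 : ∀ x, ψ x < 1 := by
    intro x
    have h := Real.arctan_lt_pi_div_two x
    have h2 : Real.arctan x / Real.pi < 1/2 := by
      rw [div_lt_iff₀ hπ0]; nlinarith
    simp only [hψdef]; linarith
  have hψm : Measurable ψ := by
    rw [hψdef]
    exact measurable_const.add (Real.continuous_arctan.measurable.div_const _)
  set ρ0 : ℝ → ℝ := fun y => Real.tan (Real.pi * (Int.fract (y / δ) - 1/2)) with hρdef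
  have hρm : Measurable ρ0 := by
    rw [hρdef]
    have htan : Measurable Real.tan := by
      have h : Real.tan = fun x => Real.sin x / Real.cos x :=
        funext fun x => Real.tan_eq_sin_div_cos x
      rw [h]
      exact Real.continuous_sin.measurable.div Real.continuous_cos.measurable
    exact htan.comp ((((measurable_id.div_const δ).fract).sub_const _).const_mul Real.pi)
  set Yδ : PathSp T × PathSp T → PathSp T :=
    fun z t => δ * (⌊z.2 t / δ⌋ : ℝ) + δ * ψ (z.1 t) with hYdef
  have hdiv : ∀ z (t : Fin T), Yδ z t / δ = (⌊z.2 t / δ⌋ : ℝ) + ψ (z.1 t) := by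
    intro z t
    simp only [hYdef]
    field_simp
  have hrec : ∀ z (t : Fin T), ρ0 (Yδ z t) = z.1 t := by
    intro z t
    simp only [hρdef]
    rw [hdiv, Int.fract_intCast_add, Int.fract_eq_self.mpr ⟨hψ0 _, hψ1 _⟩]
    simp only [hψdef]
    rw [show (1/2 : ℝ) + Real.arctan (z.1 t) / Real.pi - 1/2
        = Real.arctan (z.1 t) / Real.pi by ring]
    rw [mul_comm, div_mul_cancel₀ _ Real.pi_ne_zero]
    exact Real.tan_arctan _
  have hclose : ∀ (t : Fin T) (z : PathSp T × PathSp T), |Yδ z t - z.2 t| ≤ δ := by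
    intro t z
    have h2 : z.2 t = δ * ((⌊z.2 t / δ⌋ : ℝ) + Int.fract (z.2 t / δ)) := by
      rw [Int.floor_add_fract, mul_comm, div_mul_cancel₀ _ hδ0]
    have h3 : Yδ z t - z.2 t = δ * (ψ (z.1 t) - Int.fract (z.2 t / δ)) := by
      simp only [hYdef]
      linear_combination -h2
    rw [h3, abs_mul, abs_of_pos hδ]
    have h4 : |ψ (z.1 t) - Int.fract (z.2 t / δ)| ≤ 1 := by
      have hf0 := Int.fract_nonneg (z.2 t / δ)
      have hf1 := Int.fract_lt_one (z.2 t / δ)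
      rw [abs_le]
      constructor <;> nlinarith [hψ0 (z.1 t), hψ1 (z.1 t)]
    exact mul_le_of_le_one_right hδ.le h4
  -- σ-algebra plumbing
  have hFX_le : ∀ t, FX T t ≤ (inferInstance : MeasurableSpace (PathSp T)) := fun t =>
    iSup_le fun i => iSup_le fun _ => (measurable_pi_apply i).comap_le
  have hFX_mono : ∀ {s t : ℕ}, s ≤ t → FX T s ≤ FX T t := by
    intro s t hst
    exact iSup_le fun i => iSup_le fun hi =>
      le_iSup_of_le i (le_iSup_of_le (lt_of_lt_of_le hi hst) le_rfl)
  have hprodX_le : ∀ t, prodX T t ≤ (inferInstance : MeasurableSpace (PathSp T × PathSp T)) :=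
    fun t => (MeasurableSpace.comap_mono (hFX_le t)).trans measurable_fst.comap_le
  have hprodY_le : ∀ t, prodY T t ≤ (inferInstance : MeasurableSpace (PathSp T × PathSp T)) :=
    fun t => (MeasurableSpace.comap_mono (hFX_le t)).trans measurable_snd.comap_le
  have hprodXY_le : ∀ t, prodXY T t ≤ (inferInstance : MeasurableSpace (PathSp T × PathSp T)) :=
    fun t => sup_le (hprodX_le t) (hprodY_le t)
  have hprodX_mono : ∀ {s t : ℕ}, s ≤ t → prodX T s ≤ prodX T t :=
    fun h => MeasurableSpace.comap_mono (hFX_mono h)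
  have hprodY_mono : ∀ {s t : ℕ}, s ≤ t → prodY T s ≤ prodY T t :=
    fun h => MeasurableSpace.comap_mono (hFX_mono h)
  have hprodXY_mono : ∀ {s t : ℕ}, s ≤ t → prodXY T s ≤ prodXY T t :=
    fun h => sup_le_sup (hprodX_mono h) (hprodY_mono h)
  have hevalX : ∀ (t : ℕ) (i : Fin T), (i : ℕ) < t →
      Measurable[prodX T t] fun z : PathSp T × PathSp T => z.1 i := by
    intro t i hi
    have h1 : MeasurableSpace.comap (fun x : PathSp T => x i) inferInstance ≤ FX T t :=
      le_iSup_of_le i (le_iSup_of_le hi le_rfl)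
    have h2 := MeasurableSpace.comap_mono (g := (Prod.fst : PathSp T × PathSp T → PathSp T)) h1
    rw [MeasurableSpace.comap_comp] at h2
    exact Measurable.of_comap_le h2
  have hevalY : ∀ (t : ℕ) (i : Fin T), (i : ℕ) < t →
      Measurable[prodY T t] fun z : PathSp T × PathSp T => z.2 i := by
    intro t i hi
    have h1 : MeasurableSpace.comap (fun x : PathSp T => x i) inferInstance ≤ FX T t :=
      le_iSup_of_le i (le_iSup_of_le hi le_rfl)
    have h2 := MeasurableSpace.comap_mono (g := (Prod.snd : PathSp T × PathSp T → PathSp T)) h1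
    rw [MeasurableSpace.comap_comp] at h2
    exact Measurable.of_comap_le h2
  have hcoord : ∀ t : Fin T, Measurable[prodXY T ((t : ℕ) + 1)] fun z => Yδ z t := by
    intro t
    have hx : Measurable[prodXY T ((t : ℕ) + 1)] fun z : PathSp T × PathSp T => z.1 t :=
      (hevalX _ t (Nat.lt_succ_self _)).mono le_sup_left le_rfl
    have hy : Measurable[prodXY T ((t : ℕ) + 1)] fun z : PathSp T × PathSp T => z.2 t :=
      (hevalY _ t (Nat.lt_succ_self _)).mono le_sup_right le_rfl
    have hfl : Measurable[prodXY T ((t : ℕ) + 1)]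
        fun z : PathSp T × PathSp T => ((⌊z.2 t / δ⌋ : ℤ) : ℝ) :=
      Measurable.comp measurable_from_top (Measurable.comp Int.measurable_floor (hy.div_const δ))
    have hps : Measurable[prodXY T ((t : ℕ) + 1)]
        fun z : PathSp T × PathSp T => ψ (z.1 t) := hψm.comp hx
    simp only [hYdef]
    exact (hfl.const_mul δ).add (hps.const_mul δ)
  have hYm : Measurable Yδ :=
    measurable_pi_lambda _ fun t => (hcoord t).mono (hprodXY_le _) le_rfl
  have hΦ : Measurable (fun z : PathSp T × PathSp T => (z.1, Yδ z)) :=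
    measurable_fst.prodMk hYm
  have hYadap : ∀ t : ℕ, @Measurable _ _ (prodXY T t) (FX T t) Yδ := by
    intro t
    apply Measurable.of_comap_le
    rw [FX, MeasurableSpace.comap_iSup]
    refine iSup_le fun i => ?_
    rw [MeasurableSpace.comap_iSup]
    refine iSup_le fun hi => ?_
    rw [MeasurableSpace.comap_comp]
    exact Measurable.comap_le ((hcoord i).mono (hprodXY_mono hi) le_rfl)
  -- indicator helpers
  have hIind : ∀ C : Set (PathSp T × PathSp T), MeasurableSet C →
      Integrable (C.indicator fun _ => (1:ℝ)) π := fun C hC => (integrable_const 1).indicator hC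
  have hIC : ∀ (U C : Set (PathSp T × PathSp T)), MeasurableSet C →
      ∫ z in U, C.indicator (fun _ => (1:ℝ)) z ∂π = (π (C ∩ U)).toReal := by
    intro U C hC
    rw [integral_indicator_const (1:ℝ) hC, measureReal_restrict_apply hC, smul_eq_mul, mul_one, measureReal_def]
  have hmul_ind : ∀ (U : Set (PathSp T × PathSp T)), MeasurableSet U → ∀ g : PathSp T × PathSp T → ℝ,
      ∫ z in U, g z ∂π = ∫ z, U.indicator (fun _ => (1:ℝ)) z * g z ∂π := by
    intro U hU g
    rw [← integral_indicator hU]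
    congr 1
    funext z
    by_cases h : z ∈ U <;> simp [Set.indicator_apply, h]
  have hind_norm : ∀ (A : Set (PathSp T × PathSp T)) z, ‖A.indicator (fun _ => (1:ℝ)) z‖ ≤ 1 := by
    intro A z; by_cases h : z ∈ A <;> simp [Set.indicator_apply, h]
  have hind_prod : ∀ (A B : Set (PathSp T × PathSp T)) z,
      (A ∩ B).indicator (fun _ => (1:ℝ)) z
        = A.indicator (fun _ => (1:ℝ)) z * B.indicator (fun _ => (1:ℝ)) z := by
    intro A B z
    by_cases hA : z ∈ A <;> by_cases hB : z ∈ B <;>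
      simp [Set.indicator_apply, hA, hB]
  have hcond_bd : ∀ C : Set (PathSp T × PathSp T), MeasurableSet C →
      ∀ m' : MeasurableSpace (PathSp T × PathSp T), m' ≤ Prod.instMeasurableSpace →
      ∀ᵐ z ∂π, ‖(π[C.indicator (fun _ => (1:ℝ))|m']) z‖ ≤ 1 := by
    intro C hC m' hm'
    have h0 : (0 : PathSp T × PathSp T → ℝ) ≤ᵐ[π] π[C.indicator (fun _ => (1:ℝ))|m'] :=
      condExp_nonneg (ae_of_all _ fun z => Set.indicator_nonneg (fun _ _ => zero_le_one) z)
    have h1 : π[C.indicator (fun _ => (1:ℝ))|m'] ≤ᵐ[π] π[(fun _ => (1:ℝ))|m'] :=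
      condExp_mono (hIind C hC) (integrable_const 1)
        (ae_of_all _ fun z => by
          by_cases h : z ∈ C <;> simp [Set.indicator_apply, h])
    rw [condExp_const hm'] at h1
    filter_upwards [h0, h1] with z hz0 hz1
    have hz0' : (0:ℝ) ≤ (π[C.indicator (fun _ => (1:ℝ))|m']) z := by simpa using hz0
    rw [Real.norm_eq_abs, abs_le]
    exact ⟨by linarith, hz1⟩
  -- the key conditional-independence extension
  have hL2 : ∀ t, t ≤ T → ∀ C : Set (PathSp T × PathSp T), MeasurableSet[prodXY T t] C →
      (π[C.indicator (fun _ => (1:ℝ))|prodX T T]) =ᵐ[π]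
      (π[C.indicator (fun _ => (1:ℝ))|prodX T t]) := by
    intro t ht C hC
    have hmt := hprodX_le t
    have hmT := hprodX_le T
    have hCamb : MeasurableSet C := hprodXY_le t C hC
    have key : ∀ S : Set (PathSp T × PathSp T), MeasurableSet[prodX T T] S →
        ∫ z in S, (π[C.indicator (fun _ => (1:ℝ))|prodX T t]) z ∂π
          = ∫ z in S, C.indicator (fun _ => (1:ℝ)) z ∂π := by
      intro S hS
      have hSamb : MeasurableSet S := hmT S hS
      have swap : ∀ U V : Set (PathSp T × PathSp T), MeasurableSet U → MeasurableSet V →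
          ∫ z in U, (π[V.indicator (fun _ => (1:ℝ))|prodX T t]) z ∂π
            = ∫ z, (π[U.indicator (fun _ => (1:ℝ))|prodX T t]) z
                * (π[V.indicator (fun _ => (1:ℝ))|prodX T t]) z ∂π := by
        intro U V hU hV
        have i1 : Integrable (fun z => (π[V.indicator (fun _ => (1:ℝ))|prodX T t]) z
            * U.indicator (fun _ => (1:ℝ)) z) π :=
          Integrable.bdd_mul (hIind U hU)
            ((stronglyMeasurable_condExp.mono hmt).aestronglyMeasurable)
            (hcond_bd V hV _ hmt)
        calc ∫ z in U, (π[V.indicator (fun _ => (1:ℝ))|prodX T t]) z ∂π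
            = ∫ z, U.indicator (fun _ => (1:ℝ)) z
                * (π[V.indicator (fun _ => (1:ℝ))|prodX T t]) z ∂π := hmul_ind U hU _
          _ = ∫ z, (π[V.indicator (fun _ => (1:ℝ))|prodX T t]) z
                * U.indicator (fun _ => (1:ℝ)) z ∂π :=
              integral_congr_ae (ae_of_all _ fun z => mul_comm _ _)
          _ = ∫ z, (π[V.indicator (fun _ => (1:ℝ))|prodX T t]) z
                * (π[U.indicator (fun _ => (1:ℝ))|prodX T t]) z ∂π :=
              CausalAux.integral_mul_condexp π hmt stronglyMeasurable_condExp i1 (hIind U hU)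
          _ = ∫ z, (π[U.indicator (fun _ => (1:ℝ))|prodX T t]) z
                * (π[V.indicator (fun _ => (1:ℝ))|prodX T t]) z ∂π :=
              integral_congr_ae (ae_of_all _ fun z => mul_comm _ _)
      have h_eq : prodXY T t = MeasurableSpace.generateFrom
          {s : Set (PathSp T × PathSp T) | ∃ u v, MeasurableSet[prodX T t] u ∧
            MeasurableSet[prodY T t] v ∧ s = u ∩ v} := by
        apply le_antisymm
        · refine sup_le ?_ ?_
          · intro s hs
            exact MeasurableSpace.measurableSet_generateFrom
              ⟨s, Set.univ, hs, MeasurableSet.univ, (Set.inter_univ s).symm⟩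
          · intro s hs
            exact MeasurableSpace.measurableSet_generateFrom
              ⟨Set.univ, s, MeasurableSet.univ, hs, (Set.univ_inter s).symm⟩
        · refine MeasurableSpace.generateFrom_le ?_
          rintro s ⟨u, v, hu, hv, rfl⟩
          exact MeasurableSet.inter ((le_sup_left : prodX T t ≤ prodXY T t) u hu)
            ((le_sup_right : prodY T t ≤ prodXY T t) v hv)
      have h_pi : IsPiSystem {s : Set (PathSp T × PathSp T) | ∃ u v,
          MeasurableSet[prodX T t] u ∧ MeasurableSet[prodY T t] v ∧ s = u ∩ v} := by
        rintro s1 ⟨u1, v1, hu1, hv1, rfl⟩ s2 ⟨u2, v2, hu2, hv2, rfl⟩ -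
        exact ⟨u1 ∩ u2, v1 ∩ v2, hu1.inter hu2, hv1.inter hv2, by
          rw [Set.inter_inter_inter_comm]⟩
      have hPuniv : ∫ z in S, (Set.univ : Set (PathSp T × PathSp T)).indicator
          (fun _ => (1:ℝ)) z ∂π = ∫ z in Set.univ, (π[S.indicator (fun _ => (1:ℝ))|prodX T t]) z ∂π := by
        rw [hIC S _ MeasurableSet.univ, Set.univ_inter, Measure.restrict_univ, integral_condExp hmt, integral_indicator_const (1:ℝ) hSamb, smul_eq_mul, mul_one, measureReal_def]
      have Pind : ∀ ⦃C' : Set (PathSp T × PathSp T)⦄, MeasurableSet[prodXY T t] C' →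
          ∫ z in S, C'.indicator (fun _ => (1:ℝ)) z ∂π = ∫ z in C', (π[S.indicator (fun _ => (1:ℝ))|prodX T t]) z ∂π := by
        refine MeasurableSpace.induction_on_inter (m := prodXY T t) h_eq h_pi ?_ ?_ ?_ ?_
        · simp
        · -- basic: C' = u ∩ (snd ⁻¹' B)
          rintro s ⟨u, v, hu, hv, rfl⟩
          obtain ⟨B, hB', rfl⟩ := hv
          have huamb : MeasurableSet u := hprodX_le t u hu
          have hBamb : MeasurableSet B := hFX_le t B hB'
          have hvamb : MeasurableSet (Prod.snd ⁻¹' B : Set (PathSp T × PathSp T)) :=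
            hBamb.preimage measurable_snd
          have hD : MeasurableSet[prodX T T] (S ∩ u) := hS.inter (hprodX_mono ht u hu)
          have hDamb : MeasurableSet (S ∩ u) := hSamb.inter huamb
          have hw_int : Integrable ((Prod.snd ⁻¹' B).indicator (fun _ => (1:ℝ))) π :=
            hIind _ hvamb
          have hca := hcausal t ht B hB'
          have hwB : (fun z : PathSp T × PathSp T => B.indicator (fun _ => (1:ℝ)) z.2)
              = (Prod.snd ⁻¹' B).indicator (fun _ => (1:ℝ)) := by
            funext z
            by_cases h : z.2 ∈ B <;> simp [Set.indicator_apply, Set.mem_preimage, h]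
          rw [hwB] at hca
          have hset : (u ∩ Prod.snd ⁻¹' B) ∩ S = (Prod.snd ⁻¹' B) ∩ (S ∩ u) := by
            ext z; simp only [Set.mem_inter_iff]; tauto
          have hSU : ((S ∩ u).indicator (fun _ => (1:ℝ)) : PathSp T × PathSp T → ℝ)
              = fun z => u.indicator (fun _ => (1:ℝ)) z * S.indicator (fun _ => (1:ℝ)) z := by
            funext z
            rw [Set.inter_comm]
            exact hind_prod u S z
          have hpull : (π[(S ∩ u).indicator (fun _ => (1:ℝ))|prodX T t]) =ᵐ[π]
              fun z => u.indicator (fun _ => (1:ℝ)) z * (π[S.indicator (fun _ => (1:ℝ))|prodX T t]) z := by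
            rw [hSU]
            exact condExp_mul_of_stronglyMeasurable_left (stronglyMeasurable_const.indicator hu)
              ((hIind _ (huamb.inter hSamb)).congr (ae_of_all _ fun z => hind_prod u S z))
              (hIind S hSamb)
          have i_a : Integrable (fun z => (π[(Prod.snd ⁻¹' B).indicator
              (fun _ => (1:ℝ))|prodX T t]) z * (S ∩ u).indicator (fun _ => (1:ℝ)) z) π :=
            Integrable.bdd_mul (hIind _ hDamb)
              ((stronglyMeasurable_condExp.mono hmt).aestronglyMeasurable)
              (hcond_bd _ hvamb _ hmt)
          have i_uS : Integrable (fun z => u.indicator (fun _ => (1:ℝ)) z * (π[S.indicator (fun _ => (1:ℝ))|prodX T t]) z) π :=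
            Integrable.bdd_mul integrable_condExp
              ((measurable_const.indicator huamb).aestronglyMeasurable)
              (ae_of_all _ fun z => hind_norm u z)
          have i_b : Integrable (fun z => (u.indicator (fun _ => (1:ℝ)) z * (π[S.indicator (fun _ => (1:ℝ))|prodX T t]) z)
              * (Prod.snd ⁻¹' B).indicator (fun _ => (1:ℝ)) z) π := by
            have h := Integrable.bdd_mul i_uS
              ((measurable_const.indicator hvamb).aestronglyMeasurable)
              (ae_of_all _ fun z => hind_norm _ z)
            exact h.congr (ae_of_all _ fun z => mul_comm _ _)
          have hsm_uS : StronglyMeasurable[prodX T t]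
              (fun z => u.indicator (fun _ => (1:ℝ)) z * (π[S.indicator (fun _ => (1:ℝ))|prodX T t]) z) :=
            (stronglyMeasurable_const.indicator hu).mul stronglyMeasurable_condExp
          calc ∫ z in S, (u ∩ Prod.snd ⁻¹' B).indicator (fun _ => (1:ℝ)) z ∂π
              = (π ((u ∩ Prod.snd ⁻¹' B) ∩ S)).toReal := hIC S _ (huamb.inter hvamb)
            _ = (π ((Prod.snd ⁻¹' B) ∩ (S ∩ u))).toReal := by rw [hset]
            _ = ∫ z in S ∩ u, (Prod.snd ⁻¹' B).indicator (fun _ => (1:ℝ)) z ∂π :=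
                (hIC (S ∩ u) _ hvamb).symm
            _ = ∫ z in S ∩ u, (π[(Prod.snd ⁻¹' B).indicator (fun _ => (1:ℝ))|prodX T T]) z ∂π :=
                (setIntegral_condExp hmT hw_int hD).symm
            _ = ∫ z in S ∩ u, (π[(Prod.snd ⁻¹' B).indicator (fun _ => (1:ℝ))|prodX T t]) z ∂π :=
                integral_congr_ae (ae_restrict_of_ae hca)
            _ = ∫ z, (S ∩ u).indicator (fun _ => (1:ℝ)) z
                  * (π[(Prod.snd ⁻¹' B).indicator (fun _ => (1:ℝ))|prodX T t]) z ∂π :=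
                hmul_ind _ hDamb _
            _ = ∫ z, (π[(Prod.snd ⁻¹' B).indicator (fun _ => (1:ℝ))|prodX T t]) z
                  * (S ∩ u).indicator (fun _ => (1:ℝ)) z ∂π :=
                integral_congr_ae (ae_of_all _ fun z => mul_comm _ _)
            _ = ∫ z, (π[(Prod.snd ⁻¹' B).indicator (fun _ => (1:ℝ))|prodX T t]) z
                  * (π[(S ∩ u).indicator (fun _ => (1:ℝ))|prodX T t]) z ∂π :=
                CausalAux.integral_mul_condexp π hmt stronglyMeasurable_condExp i_a
                  (hIind _ hDamb)
            _ = ∫ z, (π[(Prod.snd ⁻¹' B).indicator (fun _ => (1:ℝ))|prodX T t]) z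
                  * (u.indicator (fun _ => (1:ℝ)) z * (π[S.indicator (fun _ => (1:ℝ))|prodX T t]) z) ∂π :=
                integral_congr_ae (by filter_upwards [hpull] with z hz; simp only [hz])
            _ = ∫ z, (u.indicator (fun _ => (1:ℝ)) z * (π[S.indicator (fun _ => (1:ℝ))|prodX T t]) z)
                  * (π[(Prod.snd ⁻¹' B).indicator (fun _ => (1:ℝ))|prodX T t]) z ∂π :=
                integral_congr_ae (ae_of_all _ fun z => mul_comm _ _)
            _ = ∫ z, (u.indicator (fun _ => (1:ℝ)) z * (π[S.indicator (fun _ => (1:ℝ))|prodX T t]) z)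
                  * (Prod.snd ⁻¹' B).indicator (fun _ => (1:ℝ)) z ∂π :=
                (CausalAux.integral_mul_condexp π hmt hsm_uS i_b hw_int).symm
            _ = ∫ z, (u ∩ Prod.snd ⁻¹' B).indicator (fun _ => (1:ℝ)) z * (π[S.indicator (fun _ => (1:ℝ))|prodX T t]) z ∂π :=
                integral_congr_ae (ae_of_all _ fun z => by simp only [hind_prod u (Prod.snd ⁻¹' B)]; ring)
            _ = ∫ z in u ∩ Prod.snd ⁻¹' B, (π[S.indicator (fun _ => (1:ℝ))|prodX T t]) z ∂π := (hmul_ind _ (huamb.inter hvamb) _).symm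
        · -- compl
          intro C' hC' hIH
          have hC'amb : MeasurableSet C' := hprodXY_le t C' hC'
          have h1 : ∫ z in S, (C'ᶜ).indicator (fun _ => (1:ℝ)) z ∂π
              = ∫ z in S, (Set.univ : Set (PathSp T × PathSp T)).indicator (fun _ => (1:ℝ)) z ∂π
                - ∫ z in S, C'.indicator (fun _ => (1:ℝ)) z ∂π := by
            rw [hIC S _ hC'amb.compl, hIC S _ MeasurableSet.univ, hIC S _ hC'amb, Set.univ_inter]
            have hsplit : π (C' ∩ S) + π (C'ᶜ ∩ S) = π S := by
              rw [Set.inter_comm, Set.inter_comm C'ᶜ S, ← Set.diff_eq]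
              exact measure_inter_add_diff S hC'amb
            rw [← hsplit, ENNReal.toReal_add (measure_ne_top _ _) (measure_ne_top _ _)]
            ring
          have h2 : ∫ z in C'ᶜ, (π[S.indicator (fun _ => (1:ℝ))|prodX T t]) z ∂π
              = ∫ z in Set.univ, (π[S.indicator (fun _ => (1:ℝ))|prodX T t]) z ∂π - ∫ z in C', (π[S.indicator (fun _ => (1:ℝ))|prodX T t]) z ∂π := by
            rw [Measure.restrict_univ]
            have := integral_add_compl hC'amb (integrable_condExp : Integrable (π[S.indicator (fun _ => (1:ℝ))|prodX T t]) π)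
            linarith
          rw [h1, h2, hPuniv, hIH]
        · -- union
          intro f hdisj hfm hind
          have hfamb : ∀ i, MeasurableSet (f i) := fun i => hprodXY_le t _ (hfm i)
          calc ∫ z in S, (⋃ i, f i).indicator (fun _ => (1:ℝ)) z ∂π
              = (π ((⋃ i, f i) ∩ S)).toReal := hIC S _ (MeasurableSet.iUnion hfamb)
            _ = (π (⋃ i, f i ∩ S)).toReal := by rw [Set.iUnion_inter]
            _ = (∑' i, π (f i ∩ S)).toReal := by
                rw [measure_iUnion
                  (fun i j hij => (hdisj hij).mono Set.inter_subset_left Set.inter_subset_left)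
                  (fun i => (hfamb i).inter hSamb)]
            _ = ∑' i, (π (f i ∩ S)).toReal :=
                ENNReal.tsum_toReal_eq fun i => measure_ne_top _ _
            _ = ∑' i, ∫ z in f i, (π[S.indicator (fun _ => (1:ℝ))|prodX T t]) z ∂π := by
                refine tsum_congr fun i => ?_
                rw [← hind i, hIC S _ (hfamb i)]
            _ = ∫ z in ⋃ i, f i, (π[S.indicator (fun _ => (1:ℝ))|prodX T t]) z ∂π :=
                (integral_iUnion hfamb hdisj integrable_condExp.integrableOn).symm
      calc ∫ z in S, (π[C.indicator (fun _ => (1:ℝ))|prodX T t]) z ∂π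
          = ∫ z, (π[S.indicator (fun _ => (1:ℝ))|prodX T t]) z
              * (π[C.indicator (fun _ => (1:ℝ))|prodX T t]) z ∂π := swap S C hSamb hCamb
        _ = ∫ z, (π[C.indicator (fun _ => (1:ℝ))|prodX T t]) z
              * (π[S.indicator (fun _ => (1:ℝ))|prodX T t]) z ∂π :=
            integral_congr_ae (ae_of_all _ fun z => mul_comm _ _)
        _ = ∫ z in C, (π[S.indicator (fun _ => (1:ℝ))|prodX T t]) z ∂π := (swap C S hCamb hSamb).symm
        _ = ∫ z in S, C.indicator (fun _ => (1:ℝ)) z ∂π := (Pind hC).symm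
    exact (ae_eq_condExp_of_forall_setIntegral_eq hmT (hIind C hCamb)
      (fun s _ _ => integrable_condExp.integrableOn)
      (fun s hs _ => key s hs)
      ((stronglyMeasurable_condExp.mono (hprodX_mono ht)).aestronglyMeasurable)).symm
  -- the modified coupling
  haveI hPM : IsProbabilityMeasure (π.map (fun z : PathSp T × PathSp T => (z.1, Yδ z))) :=
    Measure.isProbabilityMeasure_map hΦ.aemeasurable
  have hcoup : IsCoupling (π.map fun z : PathSp T × PathSp T => (z.1, Yδ z)) P (π.map Yδ) := by
    constructor
    · rw [Measure.map_map measurable_fst hΦ]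
      exact hπ.1
    · rw [Measure.map_map measurable_snd hΦ]
      rfl
  have hcausal' : Causal T (π.map fun z : PathSp T × PathSp T => (z.1, Yδ z)) := by
    intro t ht B hB
    have hBamb : MeasurableSet B := hFX_le t B hB
    have hvamb : MeasurableSet (Prod.snd ⁻¹' B : Set (PathSp T × PathSp T)) :=
      hBamb.preimage measurable_snd
    have hfF : (fun z : PathSp T × PathSp T => B.indicator (fun _ => (1:ℝ)) z.2)
        = (Prod.snd ⁻¹' B).indicator (fun _ => (1:ℝ)) := by
      funext z
      by_cases h : z.2 ∈ B <;> simp [Set.indicator_apply, Set.mem_preimage, h]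
    rw [hfF]
    have hF_int : Integrable ((Prod.snd ⁻¹' B).indicator (fun _ => (1:ℝ)))
        (π.map (fun z : PathSp T × PathSp T => (z.1, Yδ z))) :=
      (integrable_const (1:ℝ)).indicator hvamb
    have hcomapT : (prodX T T).comap (fun z : PathSp T × PathSp T => (z.1, Yδ z)) = prodX T T := by
      show ((FX T T).comap Prod.fst).comap _ = _
      rw [MeasurableSpace.comap_comp]
      rfl
    have hcomapt : (prodX T t).comap (fun z : PathSp T × PathSp T => (z.1, Yδ z)) = prodX T t := by
      show ((FX T t).comap Prod.fst).comap _ = _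
      rw [MeasurableSpace.comap_comp]
      rfl
    have h1 := CausalAux.condexp_map_comp (m := prodX T T) π hΦ (hprodX_le T) hF_int
    have h2 := CausalAux.condexp_map_comp (m := prodX T t) π hΦ (hprodX_le t) hF_int
    rw [hcomapT] at h1
    rw [hcomapt] at h2
    have hFΦ : (fun x : PathSp T × PathSp T =>
          (Prod.snd ⁻¹' B).indicator (fun _ => (1:ℝ)) ((x.1, Yδ x) : PathSp T × PathSp T))
        = (Yδ ⁻¹' B).indicator (fun _ => (1:ℝ)) := by
      funext z
      by_cases h : Yδ z ∈ B <;> simp [Set.indicator_apply, Set.mem_preimage, h]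
    rw [hFΦ] at h1 h2
    have h3 := hL2 t ht (Yδ ⁻¹' B) (hYadap t hB)
    have hmeqset : MeasurableSet {z : PathSp T × PathSp T |
        ((π.map (fun z : PathSp T × PathSp T => (z.1, Yδ z)))[(Prod.snd ⁻¹' B).indicator
          (fun _ => (1:ℝ))|prodX T T]) z
        = ((π.map (fun z : PathSp T × PathSp T => (z.1, Yδ z)))[(Prod.snd ⁻¹' B).indicator
          (fun _ => (1:ℝ))|prodX T t]) z} :=
      measurableSet_eq_fun (stronglyMeasurable_condExp.mono (hprodX_le T)).measurable
        (stronglyMeasurable_condExp.mono (hprodX_le t)).measurable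
    rw [Filter.EventuallyEq, ae_map_iff hΦ.aemeasurable hmeqset]
    filter_upwards [h1, h2, h3] with z hz1 hz2 hz3
    rw [hz1, hz3, ← hz2]
  have hycausal' : ∀ t ≤ T, ∀ A : Set (PathSp T), MeasurableSet[FX T t] A →
      ((π.map fun z : PathSp T × PathSp T => (z.1, Yδ z))[fun z => A.indicator
        (fun _ => (1:ℝ)) z.1 | prodY T T])
      =ᵐ[π.map fun z : PathSp T × PathSp T => (z.1, Yδ z)]
      ((π.map fun z : PathSp T × PathSp T => (z.1, Yδ z))[fun z => A.indicator
        (fun _ => (1:ℝ)) z.1 | prodY T t]) := by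
    intro t ht A hA
    have hAamb : MeasurableSet A := hFX_le t A hA
    have hRm : Measurable (fun y : PathSp T => (fun s => ρ0 (y s) : PathSp T)) :=
      measurable_pi_lambda _ fun s => hρm.comp (measurable_pi_apply s)
    have hmeasR : @Measurable _ _ (prodY T t) (FX T t)
        (fun z : PathSp T × PathSp T => (fun s => ρ0 (z.2 s) : PathSp T)) := by
      apply Measurable.of_comap_le
      rw [FX, MeasurableSpace.comap_iSup]
      refine iSup_le fun i => ?_
      rw [MeasurableSpace.comap_iSup]
      refine iSup_le fun hi => ?_
      rw [MeasurableSpace.comap_comp]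
      exact Measurable.comap_le (hρm.comp (hevalY t i hi))
    have hD : MeasurableSet[prodY T t]
        ((fun z : PathSp T × PathSp T => (fun s => ρ0 (z.2 s) : PathSp T)) ⁻¹' A) := hmeasR hA
    have hDamb : MeasurableSet
        ((fun z : PathSp T × PathSp T => (fun s => ρ0 (z.2 s) : PathSp T)) ⁻¹' A) :=
      hAamb.preimage (hRm.comp measurable_snd)
    have hG_int : Integrable (((fun z : PathSp T × PathSp T =>
          (fun s => ρ0 (z.2 s) : PathSp T)) ⁻¹' A).indicator (fun _ => (1:ℝ)))
        (π.map fun z : PathSp T × PathSp T => (z.1, Yδ z)) :=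
      (integrable_const (1:ℝ)).indicator hDamb
    have hG_sm : StronglyMeasurable[prodY T t] (((fun z : PathSp T × PathSp T =>
          (fun s => ρ0 (z.2 s) : PathSp T)) ⁻¹' A).indicator (fun _ => (1:ℝ))) :=
      stronglyMeasurable_const.indicator hD
    have hfG : (fun z : PathSp T × PathSp T => A.indicator (fun _ => (1:ℝ)) z.1)
        =ᵐ[π.map fun z : PathSp T × PathSp T => (z.1, Yδ z)]
        ((fun z : PathSp T × PathSp T =>
          (fun s => ρ0 (z.2 s) : PathSp T)) ⁻¹' A).indicator (fun _ => (1:ℝ)) := by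
      have hmeq : MeasurableSet {z : PathSp T × PathSp T |
          A.indicator (fun _ => (1:ℝ)) z.1 = ((fun z : PathSp T × PathSp T =>
            (fun s => ρ0 (z.2 s) : PathSp T)) ⁻¹' A).indicator (fun _ => (1:ℝ)) z} :=
        measurableSet_eq_fun ((measurable_const.indicator hAamb).comp measurable_fst)
          (measurable_const.indicator hDamb)
      rw [Filter.EventuallyEq, ae_map_iff hΦ.aemeasurable hmeq]
      refine ae_of_all _ fun z => ?_
      have hRY : (fun s => ρ0 (Yδ z s) : PathSp T) = z.1 := funext fun s => hrec z s
      show A.indicator (fun _ => (1:ℝ)) z.1 = _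
      by_cases h : z.1 ∈ A
      · simp [Set.indicator_apply, Set.mem_preimage, hRY, h]
      · simp [Set.indicator_apply, Set.mem_preimage, hRY, h]
    have e1 := condExp_congr_ae (m := prodY T T) hfG
    have e4 := condExp_congr_ae (m := prodY T t) hfG
    have e2 := condExp_of_stronglyMeasurable (hprodY_le T)
      (hG_sm.mono (hprodY_mono ht)) hG_int
    have e3 := condExp_of_stronglyMeasurable (hprodY_le t) hG_sm hG_int
    refine e1.trans ?_
    rw [e2, ← e3]
    exact e4.symm
  exact ⟨Yδ, hYm, hcoord, fun t => ⟨ρ0, hρm, fun z => hrec z t⟩, hclose, hcoup,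
    hcausal', hycausal'⟩

end
end

section
/- For every δ > 0 there exist Borel maps ψ_δ : ℝ → (0,δ) and φ_δ : ℝ → δℤ such that ψ_δ is a Borel isomorphism onto its image, φ_δ(x) = max{δk : k ∈ ℤ, δk ≤ x}, and the map y_δ(u,v) := φ_δ(v) + ψ_δ(u) satisfies: (i) u is σ(y_δ(u,v))-measurably recoverable from y_δ(u,v) (i.e., there is a Borel map ρ with ρ(y_δ(u,v)) = u for all u,v ∈ ℝ), and (ii) |y_δ(u,v) − v| ≤ δ for all u,v ∈ ℝ. -/
open MeasureTheory Set

/-- for every δ > 0 there are Borel maps ψ_δ : ℝ → (0,δ) (a Borel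
isomorphism onto its image) and φ_δ(x) = max{δk : k ∈ ℤ, δk ≤ x} = δ⌊x/δ⌋ such that
y_δ(u,v) := φ_δ(v) + ψ_δ(u) encodes u measurably (∃ Borel ρ with ρ(y_δ(u,v)) = u)
and satisfies |y_δ(u,v) - v| ≤ δ for all u, v. -/
theorem discretization_encoding (δ : ℝ) (hδ : 0 < δ) :
    ∃ ψ φ : ℝ → ℝ,
      MeasurableEmbedding ψ ∧ (∀ u, ψ u ∈ Set.Ioo 0 δ) ∧
      (∀ x, φ x = δ * (⌊x / δ⌋ : ℤ)) ∧
      (∀ x, φ x ∈ {y : ℝ | ∃ k : ℤ, y = δ * k} ∧ φ x ≤ x ∧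
        ∀ k : ℤ, (δ * k : ℝ) ≤ x → (δ * k : ℝ) ≤ φ x) ∧
      (∃ ρ : ℝ → ℝ, Measurable ρ ∧ ∀ u v, ρ (φ v + ψ u) = u) ∧
      (∀ u v, |φ v + ψ u - v| ≤ δ) := by
  -- f maps ℝ into (-1,1), g is its left inverse
  set f : ℝ → ℝ := fun u => u / (1 + |u|) with hf
  set g : ℝ → ℝ := fun t => t / (1 - |t|) with hg
  have hpos : ∀ u : ℝ, (0:ℝ) < 1 + |u| := fun u => by positivity
  have hgf : ∀ u, g (f u) = u := by
    intro u
    have h1 := hpos u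
    have habs : |u / (1 + |u|)| = |u| / (1 + |u|) := by
      rw [abs_div, abs_of_pos h1]
    simp only [hf, hg, habs]
    have h2 : 1 - |u| / (1 + |u|) = 1 / (1 + |u|) := by
      field_simp
      ring
    rw [h2]
    field_simp
  have hfmem : ∀ u, f u ∈ Set.Ioo (-1 : ℝ) 1 := by
    intro u
    have h1 := hpos u
    constructor
    · rw [lt_div_iff₀ h1]
      nlinarith [neg_abs_le u]
    · rw [div_lt_iff₀ h1]
      nlinarith [le_abs_self u]
  have hfcont : Continuous f := by
    apply Continuous.div continuous_id
    · exact continuous_const.add continuous_abs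
    · intro u; exact ne_of_gt (hpos u)
  set ψ : ℝ → ℝ := fun u => δ * (f u + 1) / 2 with hψ
  have hψcont : Continuous ψ := by
    exact ((continuous_const.mul (hfcont.add continuous_const)).div_const 2)
  have hψinj : Function.Injective ψ := by
    intro a b hab
    have : f a = f b := by
      simp only [hψ] at hab
      field_simp at hab
      linarith
    calc a = g (f a) := (hgf a).symm
      _ = g (f b) := by rw [this]
      _ = b := hgf b
  have hψmem : ∀ u, ψ u ∈ Set.Ioo 0 δ := by
    intro u
    obtain ⟨h1, h2⟩ := hfmem u
    constructor
    · simp only [hψ]; nlinarith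
    · simp only [hψ]; nlinarith
  set φ : ℝ → ℝ := fun x => δ * (⌊x / δ⌋ : ℤ) with hφ
  refine ⟨ψ, φ, hψcont.measurable.measurableEmbedding hψinj, hψmem, fun x => rfl, ?_, ?_, ?_⟩
  · intro x
    refine ⟨⟨⌊x / δ⌋, rfl⟩, ?_, ?_⟩
    · have := Int.floor_le (x / δ)
      calc δ * (⌊x / δ⌋ : ℤ) ≤ δ * (x / δ) := by
            exact mul_le_mul_of_nonneg_left this hδ.le
        _ = x := by field_simp
    · intro k hk
      have : (k : ℝ) ≤ x / δ := by
        rw [le_div_iff₀ hδ]; linarith [hk]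
      have hk' : k ≤ ⌊x / δ⌋ := Int.le_floor.mpr this
      exact mul_le_mul_of_nonneg_left (by exact_mod_cast hk') hδ.le
  · -- decoding
    set ρ : ℝ → ℝ := fun y => g ((y - δ * (⌊y / δ⌋ : ℤ)) * 2 / δ - 1) with hρ
    have hfl : Measurable fun y : ℝ => ((⌊y / δ⌋ : ℤ) : ℝ) :=
      measurable_from_top.comp (measurable_id.div_const δ).floor
    have harg : Measurable fun y : ℝ => (y - δ * (⌊y / δ⌋ : ℤ)) * 2 / δ - 1 :=
      (((measurable_id.sub (hfl.const_mul δ)).mul_const 2).div_const δ).sub measurable_const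
    have hρmeas : Measurable ρ := by
      apply Measurable.div harg
      exact Measurable.sub measurable_const harg.abs
    refine ⟨ρ, hρmeas, fun u v => ?_⟩
    have hmem := hψmem u
    have hfloor : ⌊(φ v + ψ u) / δ⌋ = ⌊v / δ⌋ := by
      have : (φ v + ψ u) / δ = (⌊v / δ⌋ : ℝ) + ψ u / δ := by
        simp only [hφ]; field_simp
      rw [this, add_comm, Int.floor_add_intCast, Int.floor_eq_zero_iff.mpr, zero_add]
      constructor
      · exact div_nonneg hmem.1.le hδ.le
      · rw [div_lt_one hδ]; exact hmem.2
    have hrec : (φ v + ψ u - δ * (⌊(φ v + ψ u) / δ⌋ : ℤ)) * 2 / δ - 1 = f u := by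
      rw [hfloor]
      simp only [hφ, hψ]
      field_simp
      ring
    simp only [hρ]
    rw [hrec, hgf]
  · intro u v
    obtain ⟨h1, h2⟩ := hψmem u
    have hle : φ v ≤ v := by
      simp only [hφ]
      have := Int.floor_le (v / δ)
      calc δ * (⌊v / δ⌋ : ℤ) ≤ δ * (v / δ) := mul_le_mul_of_nonneg_left this hδ.le
        _ = v := by field_simp
    have hgt : v - δ < φ v := by
      simp only [hφ]
      have := Int.lt_floor_add_one (v / δ)
      have hv : δ * (v / δ) = v := by field_simp
      nlinarith [mul_lt_mul_of_pos_left this hδ]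
    rw [abs_le]
    constructor <;> nlinarith
end

section
/- Let π be a bicausal coupling between P, Q ∈ 𝒫_p(ℝ^T) and let g : ℝ^T → ℝ be Borel with E_P[|g(X)|] < ∞. Then for every t ∈ {1,...,T}, E_π[g(X) | ℱ_t^{X,Y}] = E_P[g(X) | ℱ_t^X] holds π-almost surely, where ℱ_t^{X,Y} = σ(X_1,...,X_t,Y_1,...,Y_t) and ℱ_t^X = σ(X_1,...,X_t). -/
open MeasureTheory ProbabilityTheory Filter Set

noncomputable section

/- ---------------- auxiliary lemmas ---------------- -/

lemma FX_le' (T t : ℕ) : FX T t ≤ (inferInstance : MeasurableSpace (PathSp T)) :=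
  iSup_le fun i => iSup_le fun _ => measurable_iff_comap_le.mp (measurable_pi_apply i)

lemma FX_top' (T : ℕ) : FX T T = (inferInstance : MeasurableSpace (PathSp T)) := by
  refine le_antisymm (FX_le' T T) ?_
  exact iSup_le fun i => le_iSup_of_le i (le_iSup_of_le i.2 le_rfl)

lemma prodX_le' (T t : ℕ) :
    prodX T t ≤ (inferInstance : MeasurableSpace (PathSp T × PathSp T)) :=
  le_trans (MeasurableSpace.comap_mono (FX_le' T t)) (measurable_iff_comap_le.mp measurable_fst)

lemma prodY_le' (T t : ℕ) :
    prodY T t ≤ (inferInstance : MeasurableSpace (PathSp T × PathSp T)) :=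
  le_trans (MeasurableSpace.comap_mono (FX_le' T t)) (measurable_iff_comap_le.mp measurable_snd)

lemma prodXY_le' (T t : ℕ) :
    prodXY T t ≤ (inferInstance : MeasurableSpace (PathSp T × PathSp T)) :=
  sup_le (prodX_le' T t) (prodY_le' T t)

/-- The key computation: for a causal coupling, the integral of `f ∘ fst` over a rectangle
`fst⁻¹ B ∩ snd⁻¹ C` with `B, C ∈ FX t` can be written using the conditional expectations
with respect to `prodX T t` only. -/
lemma key_rect (T t : ℕ) (htT : t ≤ T)
    (π : Measure (PathSp T × PathSp T)) [IsProbabilityMeasure π]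
    (hcaus : ∀ A : Set (PathSp T), MeasurableSet[FX T t] A →
      (π[fun z => A.indicator (fun _ => (1:ℝ)) z.2 | prodX T T]) =ᵐ[π]
      (π[fun z => A.indicator (fun _ => (1:ℝ)) z.2 | prodX T t]))
    (f : PathSp T → ℝ) (hfm : StronglyMeasurable f)
    (hfπ : Integrable (fun z => f z.1) π)
    (B Cs : Set (PathSp T)) (hB : MeasurableSet[FX T t] B) (hC : MeasurableSet[FX T t] Cs) :
    ∫ z in Prod.fst ⁻¹' B ∩ Prod.snd ⁻¹' Cs, f z.1 ∂π
      = ∫ z, (B.indicator (fun _ => (1:ℝ)) z.1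
          * (π[fun z => Cs.indicator (fun _ => (1:ℝ)) z.2 | prodX T t]) z)
          * (π[fun z => f z.1 | prodX T t]) z ∂π := by
  have hm1 : prodX T t ≤ (inferInstance : MeasurableSpace (PathSp T × PathSp T)) := prodX_le' T t
  have hmT : prodX T T ≤ (inferInstance : MeasurableSpace (PathSp T × PathSp T)) := prodX_le' T T
  have hBm : MeasurableSet B := FX_le' T t _ hB
  have hCm : MeasurableSet Cs := FX_le' T t _ hC
  set u : PathSp T × PathSp T → ℝ := fun z => Cs.indicator (fun _ => (1:ℝ)) z.2 with hu
  set φ : PathSp T × PathSp T → ℝ := π[u | prodX T t] with hφ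
  set F : PathSp T × PathSp T → ℝ := fun z => B.indicator (fun _ => (1:ℝ)) z.1 * f z.1 with hF
  have hu01 : ∀ z, 0 ≤ u z ∧ u z ≤ 1 := by
    intro z
    by_cases hz : z.2 ∈ Cs <;> simp [hu, Set.indicator, hz]
  have hum : StronglyMeasurable u := by
    rw [hu]
    exact ((stronglyMeasurable_const).indicator hCm).comp_measurable measurable_snd
  have huint : Integrable u π := by
    have h1 : u = Set.indicator (Prod.snd ⁻¹' Cs) (fun _ => (1:ℝ)) := by
      funext z; by_cases hz : z.2 ∈ Cs <;> simp [hu, Set.indicator, hz]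
    rw [h1]
    exact (integrable_const 1).indicator (measurable_snd hCm)
  have hFind : F = Set.indicator (Prod.fst ⁻¹' B) (fun z => f z.1) := by
    funext z; by_cases hz : z.1 ∈ B <;> simp [hF, Set.indicator, hz]
  have hFint : Integrable F π := by
    rw [hFind]; exact hfπ.indicator (measurable_fst hBm)
  have hFm : StronglyMeasurable[prodX T T] F := by
    have hbase : StronglyMeasurable (fun x : PathSp T => B.indicator (fun _ => (1:ℝ)) x * f x) :=
      ((stronglyMeasurable_const).indicator hBm).mul hfm
    have heq : prodX T T
        = MeasurableSpace.comap Prod.fst (inferInstance : MeasurableSpace (PathSp T)) := by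
      rw [prodX, FX_top']
    rw [hF, heq]
    exact hbase.comp_measurable (comap_measurable _)
  have hFuint : Integrable (F * u) π := by
    have h1 : F * u = fun z => u z * F z := by
      funext z; simp [Pi.mul_apply, mul_comm]
    rw [h1]
    refine hFint.bdd_mul (c := 1) hum.aestronglyMeasurable ?_
    refine Eventually.of_forall fun z => ?_
    rw [Real.norm_eq_abs, abs_of_nonneg (hu01 z).1]
    exact (hu01 z).2
  have hcaus' : (π[u | prodX T T]) =ᵐ[π] φ := by
    have h1 := hcaus Cs hC
    rw [← hu, ← hφ] at h1
    exact h1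
  -- step 1
  have step1 : ∫ z in Prod.fst ⁻¹' B ∩ Prod.snd ⁻¹' Cs, f z.1 ∂π = ∫ z, (F * u) z ∂π := by
    rw [← integral_indicator ((measurable_fst hBm).inter (measurable_snd hCm))]
    refine integral_congr_ae (Eventually.of_forall fun z => ?_)
    by_cases h1 : z.1 ∈ B <;> by_cases h2 : z.2 ∈ Cs <;>
      simp [Set.indicator, h1, h2, hF, hu]
  -- step 2 : condition on prodX T T and use causality
  have step2 : ∫ z, (F * u) z ∂π = ∫ z, F z * φ z ∂π := by
    rw [← integral_condExp hmT (f := F * u) (μ := π)]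
    refine integral_congr_ae ?_
    filter_upwards [condExp_mul_of_stronglyMeasurable_left hFm hFuint huint, hcaus'] with z h1 h2
    rw [h1, Pi.mul_apply, h2]
  -- bounds on φ
  have hφ0 : (0 : PathSp T × PathSp T → ℝ) ≤ᵐ[π] φ := by
    have h1 := condExp_mono (m := prodX T t) (μ := π)
      (integrable_zero _ _ _) huint
      (Eventually.of_forall fun z : PathSp T × PathSp T => (hu01 z).1)
    have hz0 : (π[(fun _ : PathSp T × PathSp T => (0:ℝ)) | prodX T t]) = 0 := by
      rw [show (fun _ : PathSp T × PathSp T => (0:ℝ)) = (0 : PathSp T × PathSp T → ℝ) from rfl,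
        condExp_zero]
    rw [hz0, ← hφ] at h1
    exact h1
  have hφ1 : φ ≤ᵐ[π] fun _ => (1:ℝ) := by
    have h1 := condExp_mono (m := prodX T t) (μ := π)
      huint (integrable_const 1)
      (Eventually.of_forall fun z : PathSp T × PathSp T => (hu01 z).2)
    rw [condExp_const hm1, ← hφ] at h1
    exact h1
  set K : PathSp T × PathSp T → ℝ := fun z => B.indicator (fun _ => (1:ℝ)) z.1 * φ z with hK
  have hφm1 : StronglyMeasurable[prodX T t] φ := by
    rw [hφ]; exact stronglyMeasurable_condExp
  have hKm1 : StronglyMeasurable[prodX T t] K := by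
    have h1 : StronglyMeasurable[prodX T t]
        (fun z : PathSp T × PathSp T => B.indicator (fun _ => (1:ℝ)) z.1) := by
      have h2 : StronglyMeasurable[FX T t] (B.indicator (fun _ => (1:ℝ))) :=
        (stronglyMeasurable_const).indicator hB
      exact h2.comp_measurable (comap_measurable _)
    rw [hK]
    exact h1.mul hφm1
  have hKbound : ∀ᵐ z ∂π, ‖K z‖ ≤ 1 := by
    filter_upwards [hφ0, hφ1] with z h0 h1
    have h0' : 0 ≤ φ z := h0
    have h1' : φ z ≤ 1 := h1
    by_cases hz : z.1 ∈ B
    · simp only [hK, Set.indicator_of_mem hz, one_mul, Real.norm_eq_abs]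
      rw [abs_of_nonneg h0']; exact h1'
    · simp [hK, Set.indicator_of_notMem hz]
  have hKfint : Integrable (fun z => K z * f z.1) π :=
    hfπ.bdd_mul ((hKm1.mono hm1).aestronglyMeasurable) hKbound
  have step5 : ∫ z, F z * φ z ∂π = ∫ z, K z * f z.1 ∂π := by
    refine integral_congr_ae (Eventually.of_forall fun z => ?_)
    simp only [hF, hK]; ring
  have step6 : ∫ z, K z * f z.1 ∂π = ∫ z, K z * (π[fun z => f z.1 | prodX T t]) z ∂π := by
    have hpull := condExp_mul_of_stronglyMeasurable_left (μ := π) hKm1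
      (by exact hKfint) hfπ
    calc ∫ z, K z * f z.1 ∂π
        = ∫ z, (K * fun z : PathSp T × PathSp T => f z.1) z ∂π := rfl
      _ = ∫ z, (π[K * (fun z : PathSp T × PathSp T => f z.1) | prodX T t]) z ∂π :=
          (integral_condExp hm1).symm
      _ = ∫ z, K z * (π[fun z => f z.1 | prodX T t]) z ∂π := by
          refine integral_congr_ae (hpull.mono fun z hz => ?_)
          rw [hz, Pi.mul_apply]
  rw [step1, step2, step5, step6]

/-- for a bicausal coupling π between P and Q and g integrable under P,
E_π[g(X) | ℱ_t^{X,Y}] = E_P[g(X) | ℱ_t^X] π-almost surely, for each 1 ≤ t ≤ T. -/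
theorem bicausal_condexp
    (T : ℕ) (p : ℝ) (hp : 1 < p)
    (P Q : Measure (PathSp T)) [IsProbabilityMeasure P] [IsProbabilityMeasure Q]
    (hPm : FiniteMoment p P) (hQm : FiniteMoment p Q)
    (π : Measure (PathSp T × PathSp T)) [IsProbabilityMeasure π]
    (hπ : IsCoupling π P Q) (hbc : Bicausal T π)
    (g : PathSp T → ℝ) (hgm : Measurable g) (hgi : Integrable g P)
    (t : ℕ) (ht1 : 1 ≤ t) (htT : t ≤ T) :
    (π[fun z => g z.1 | prodXY T t]) =ᵐ[π] fun z => (P[g | FX T t]) z.1 := by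
  classical
  have hmFX : FX T t ≤ (inferInstance : MeasurableSpace (PathSp T)) := FX_le' T t
  have hm1 : prodX T t ≤ (inferInstance : MeasurableSpace (PathSp T × PathSp T)) := prodX_le' T t
  have hmXY : prodXY T t ≤ (inferInstance : MeasurableSpace (PathSp T × PathSp T)) :=
    prodXY_le' T t
  have hmap : π.map Prod.fst = P := hπ.1
  have intfst : ∀ f : PathSp T → ℝ, StronglyMeasurable f → Integrable f P →
      Integrable (fun z => f z.1) π := by
    intro f hfm hfi
    have h1 : AEStronglyMeasurable f (π.map Prod.fst) := by
      rw [hmap]; exact hfm.aestronglyMeasurable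
    exact (integrable_map_measure h1 measurable_fst.aemeasurable).mp (by rwa [hmap])
  have hhsm : StronglyMeasurable (P[g | FX T t]) := stronglyMeasurable_condExp.mono hmFX
  have hhP : Integrable (P[g | FX T t]) P := integrable_condExp
  have hgπ : Integrable (fun z => g z.1) π := intfst g hgm.stronglyMeasurable hgi
  have hhπ : Integrable (fun z => (P[g | FX T t]) z.1) π := intfst _ hhsm hhP
  have hfstm1 : Measurable[prodX T t, FX T t] Prod.fst := comap_measurable _
  have hhm1 : StronglyMeasurable[prodX T t] (fun z : PathSp T × PathSp T => (P[g | FX T t]) z.1) :=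
    stronglyMeasurable_condExp.comp_measurable hfstm1
  -- transport of set integrals over fst-preimages
  have hsetint : ∀ f : PathSp T → ℝ, StronglyMeasurable f → ∀ B : Set (PathSp T),
      MeasurableSet B → ∫ z in Prod.fst ⁻¹' B, f z.1 ∂π = ∫ x in B, f x ∂P := by
    intro f hfm B hB
    rw [← hmap, setIntegral_map hB (by rw [hmap]; exact hfm.aestronglyMeasurable)
      measurable_fst.aemeasurable]
  -- the conditional expectation of g∘fst given prodX T t is (P[g|FX T t])∘fst
  have hA : (π[(fun z => g z.1) | prodX T t]) =ᵐ[π] fun z => (P[g | FX T t]) z.1 := by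
    refine (ae_eq_condExp_of_forall_setIntegral_eq hm1 hgπ (fun s _ _ => hhπ.integrableOn)
      (fun s hs _ => ?_) (hhm1.aestronglyMeasurable)).symm
    obtain ⟨B, hB, rfl⟩ := MeasurableSpace.measurableSet_comap.mp hs
    have hBm : MeasurableSet B := hmFX _ hB
    rw [hsetint _ hhsm B hBm, hsetint g hgm.stronglyMeasurable B hBm,
      setIntegral_condExp hmFX hgi hB]
  have hAh : (π[(fun z => (P[g | FX T t]) z.1) | prodX T t]) = fun z => (P[g | FX T t]) z.1 :=
    condExp_of_stronglyMeasurable hm1 hhm1 hhπ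
  -- total integrals agree
  have htotal : ∫ z, (P[g | FX T t]) z.1 ∂π = ∫ z, g z.1 ∂π := by
    have h1 : ∫ z, (P[g | FX T t]) z.1 ∂π = ∫ x, (P[g | FX T t]) x ∂P := by
      rw [← hmap, integral_map measurable_fst.aemeasurable
        (by rw [hmap]; exact hhsm.aestronglyMeasurable)]
    have h2 : ∫ z, g z.1 ∂π = ∫ x, g x ∂P := by
      rw [← hmap, integral_map measurable_fst.aemeasurable
        (by rw [hmap]; exact hgm.stronglyMeasurable.aestronglyMeasurable)]
    rw [h1, h2, integral_condExp hmFX]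
  -- the generating π-system
  set S : Set (Set (PathSp T × PathSp T)) :=
    {s | ∃ B Cs : Set (PathSp T), MeasurableSet[FX T t] B ∧ MeasurableSet[FX T t] Cs ∧
      s = Prod.fst ⁻¹' B ∩ Prod.snd ⁻¹' Cs} with hS
  have hgen : prodXY T t = MeasurableSpace.generateFrom S := by
    apply le_antisymm
    · refine sup_le ?_ ?_
      · rw [MeasurableSpace.le_def]
        intro s hs
        obtain ⟨B, hB, rfl⟩ := MeasurableSpace.measurableSet_comap.mp hs
        refine MeasurableSpace.measurableSet_generateFrom ?_
        exact ⟨B, Set.univ, hB, MeasurableSet.univ, by simp⟩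
      · rw [MeasurableSpace.le_def]
        intro s hs
        obtain ⟨Cs, hC, rfl⟩ := MeasurableSpace.measurableSet_comap.mp hs
        refine MeasurableSpace.measurableSet_generateFrom ?_
        exact ⟨Set.univ, Cs, MeasurableSet.univ, hC, by simp⟩
    · refine MeasurableSpace.generateFrom_le ?_
      rintro s ⟨B, Cs, hB, hC, rfl⟩
      have h1 : MeasurableSet[prodX T t] (Prod.fst ⁻¹' B) := ⟨B, hB, rfl⟩
      have h2 : MeasurableSet[prodY T t] (Prod.snd ⁻¹' Cs) := ⟨Cs, hC, rfl⟩
      exact MeasurableSet.inter ((le_sup_left : prodX T t ≤ prodXY T t) _ h1)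
        ((le_sup_right : prodY T t ≤ prodXY T t) _ h2)
  have hpi : IsPiSystem S := by
    rintro s ⟨B1, C1, hB1, hC1, rfl⟩ s' ⟨B2, C2, hB2, hC2, rfl⟩ -
    refine ⟨B1 ∩ B2, C1 ∩ C2, hB1.inter hB2, hC1.inter hC2, ?_⟩
    ext z
    simp only [Set.mem_inter_iff, Set.mem_preimage]
    tauto
  -- the main set-integral equality, by π-λ induction
  have heq : ∀ s : Set (PathSp T × PathSp T), MeasurableSet[prodXY T t] s →
      ∫ z in s, (P[g | FX T t]) z.1 ∂π = ∫ z in s, g z.1 ∂π := by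
    intro s hs
    refine @MeasurableSpace.induction_on_inter (PathSp T × PathSp T) (prodXY T t)
      (fun s _ => ∫ z in s, (P[g | FX T t]) z.1 ∂π = ∫ z in s, g z.1 ∂π) S
      hgen hpi ?_ ?_ ?_ ?_ s hs
    · simp
    · rintro s' ⟨B, Cs, hB, hC, rfl⟩
      rw [key_rect T t htT π (hbc.1 t htT) _ hhsm hhπ B Cs hB hC,
        key_rect T t htT π (hbc.1 t htT) g hgm.stronglyMeasurable hgπ B Cs hB hC]
      refine integral_congr_ae ?_
      filter_upwards [hA] with z hz
      rw [hAh, hz]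
    · intro s' hsm hCs
      have hs' : MeasurableSet s' := hmXY _ hsm
      have e1 := integral_add_compl hs' hhπ
      have e2 := integral_add_compl hs' hgπ
      linarith
    · intro fs hdisj hmeas hCn
      rw [integral_iUnion (fun i => hmXY _ (hmeas i)) hdisj hhπ.integrableOn,
        integral_iUnion (fun i => hmXY _ (hmeas i)) hdisj hgπ.integrableOn]
      exact tsum_congr hCn
  refine (ae_eq_condExp_of_forall_setIntegral_eq hmXY hgπ (fun s _ _ => hhπ.integrableOn)
    (fun s hs _ => heq s hs)
    ((hhm1.mono (le_sup_left : prodX T t ≤ prodXY T t)).aestronglyMeasurable)).symm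

end
end

section
/- Let f : ℝ^T × ℝ^T → ℝ be such that for every x, f(x,·) is twice continuously differentiable and strongly convex: ∇²_a f(x,a) ≻ ε(x)·I for a ∈ [−L,L]^T with P(ε(X) > 0) = 1, and suppose E_P[|f(X,a)|] < ∞ for all a ∈ [−L,L]^T. Then there exists exactly one predictable control a* ∈ 𝒜 (up to P-a.s. equality) with v(P) = E_P[f(X, a*(X))], where v(P) = inf_{a ∈ 𝒜} E_P[f(X,a(X))] and 𝒜 is the set of predictable controls bounded by L. -/
open MeasureTheory ProbabilityTheory Filter Set

noncomputable section

/-- Predictable controls bounded by `L`: `a_t` depends only on `x_1,…,x_{t-1}`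
and `|a_t| ≤ L`. -/
def PredictableControl (T : ℕ) (L : ℝ) (a : Fin T → PathSp T → ℝ) : Prop :=
  ∀ t : Fin T, Measurable[FX T (t : ℕ)] (a t) ∧ ∀ x, |a t x| ≤ L

/-- Value `v(Q) = inf_{a ∈ 𝒜} E_Q[f(X, a(X))]` of the multiperiod stochastic
optimization problem. -/
def cval (T : ℕ) (L : ℝ) (f : PathSp T → (Fin T → ℝ) → ℝ)
    (Q : Measure (PathSp T)) : ℝ :=
  sInf { v | ∃ a, PredictableControl T L a ∧ v = ∫ x, f x (fun t => a t x) ∂Q }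

section UOptAux
open Topology
namespace UOpt
variable {T : ℕ}

lemma line_hasDerivAt {F : (Fin T → ℝ) → ℝ} (hF : ContDiff ℝ 2 F)
    (c u : Fin T → ℝ) (s : ℝ) :
    HasDerivAt (fun s : ℝ => F (c + s • u)) (fderiv ℝ F (c + s • u) u) s := by
  have hγ : HasDerivAt (fun s : ℝ => c + s • u) u s := by
    simpa using ((hasDerivAt_id s).smul_const u).const_add c
  exact (((hF.differentiable (by norm_num)) (c + s • u)).hasFDerivAt).comp_hasDerivAt s hγ

lemma line_hasDerivAt2 {F : (Fin T → ℝ) → ℝ} (hF : ContDiff ℝ 2 F)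
    (c u : Fin T → ℝ) (s : ℝ) :
    HasDerivAt (fun s : ℝ => fderiv ℝ F (c + s • u) u)
      (fderiv ℝ (fderiv ℝ F) (c + s • u) u u) s := by
  have hγ : HasDerivAt (fun s : ℝ => c + s • u) u s := by
    simpa using ((hasDerivAt_id s).smul_const u).const_add c
  have hd : ContDiff ℝ 1 (fderiv ℝ F) := hF.fderiv_right (by norm_num)
  have h1 : HasFDerivAt (fderiv ℝ F) (fderiv ℝ (fderiv ℝ F) (c + s • u)) (c + s • u) :=
    ((hd.differentiable one_ne_zero) _).hasFDerivAt
  have h2 := ((ContinuousLinearMap.apply ℝ ℝ u).hasFDerivAt.comp _ h1).comp_hasDerivAt s hγ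
  exact h2

/-- On a segment inside the cube, the function `s ↦ F(c+s•u) - (m/2)s²` is convex
provided the Hessian quadratic form dominates `m` along the segment. -/
lemma seg_convex {F : (Fin T → ℝ) → ℝ} (hF : ContDiff ℝ 2 F) (c u : Fin T → ℝ) (m : ℝ)
    (hm : ∀ s ∈ Set.Ioo (0:ℝ) 1, m ≤ fderiv ℝ (fderiv ℝ F) (c + s • u) u u) :
    ConvexOn ℝ (Set.Icc (0:ℝ) 1) (fun s => F (c + s • u) - m / 2 * s ^ 2) := by
  set g : ℝ → ℝ := fun s => F (c + s • u) - m / 2 * s ^ 2 with hg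
  have hder : ∀ s : ℝ, HasDerivAt g (fderiv ℝ F (c + s • u) u - m * s) s := by
    intro s
    have h1 := line_hasDerivAt hF c u s
    have h2 : HasDerivAt (fun s : ℝ => m / 2 * s ^ 2) (m * s) s := by
      have := (hasDerivAt_pow 2 s).const_mul (m / 2)
      exact this.congr_deriv (by ring)
    exact h1.sub h2
  have hder1 : deriv g = fun s => fderiv ℝ F (c + s • u) u - m * s :=
    funext fun s => (hder s).deriv
  have hder2 : ∀ s : ℝ,
      HasDerivAt (deriv g) (fderiv ℝ (fderiv ℝ F) (c + s • u) u u - m) s := by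
    intro s
    rw [hder1]
    exact (line_hasDerivAt2 hF c u s).sub (((hasDerivAt_id s).const_mul m).congr_deriv (mul_one m))
  apply convexOn_of_deriv2_nonneg (convex_Icc 0 1)
  · exact fun s _ => ((hder s).differentiableAt).continuousAt.continuousWithinAt
  · exact fun s _ => ((hder s).differentiableAt).differentiableWithinAt
  · exact fun s _ => ((hder2 s).differentiableAt).differentiableWithinAt
  · intro s hs
    have : deriv (deriv g) s = fderiv ℝ (fderiv ℝ F) (c + s • u) u u - m :=
      (hder2 s).deriv
    have hs' : s ∈ Set.Ioo (0:ℝ) 1 := by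
      rwa [interior_Icc] at hs
    simp only [Function.iterate_succ, Function.iterate_zero, Function.comp_apply, id_eq]
    rw [this]
    linarith [hm s hs']

def cube (T : ℕ) (L : ℝ) : Set (Fin T → ℝ) := Set.Icc (fun _ => -L) (fun _ => L)

lemma mem_cube_iff {L : ℝ} {a : Fin T → ℝ} :
    a ∈ cube T L ↔ ∀ t, -L ≤ a t ∧ a t ≤ L := by
  simp only [cube, Set.mem_Icc, Pi.le_def]
  exact ⟨fun h t => ⟨h.1 t, h.2 t⟩, fun h => ⟨fun t => (h t).1, fun t => (h t).2⟩⟩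

lemma seg_mem_cube {L : ℝ} {c d : Fin T → ℝ} (hc : c ∈ cube T L) (hd : d ∈ cube T L)
    {s : ℝ} (hs0 : 0 ≤ s) (hs1 : s ≤ 1) : c + s • (d - c) ∈ cube T L := by
  rw [mem_cube_iff] at hc hd ⊢
  intro t
  have h1 := (hc t).1; have h2 := (hc t).2; have h3 := (hd t).1; have h4 := (hd t).2
  simp only [Pi.add_apply, Pi.smul_apply, Pi.sub_apply, smul_eq_mul]
  constructor <;> nlinarith

/-- The key midpoint strong-convexity inequality. -/
lemma midpoint_ineq {F : (Fin T → ℝ) → ℝ} (hF : ContDiff ℝ 2 F) {L m : ℝ}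
    (hs : ∀ a ∈ cube T L, ∀ u : Fin T → ℝ,
      fderiv ℝ (fderiv ℝ F) a u u ≥ m * ∑ t : Fin T, u t ^ 2)
    {c d : Fin T → ℝ} (hc : c ∈ cube T L) (hd : d ∈ cube T L) :
    F ((1/2 : ℝ) • (c + d)) ≤
      (F c + F d) / 2 - m / 8 * ∑ t : Fin T, (d t - c t) ^ 2 := by
  set u : Fin T → ℝ := d - c with hu
  set M : ℝ := m * ∑ t : Fin T, (d t - c t) ^ 2 with hM
  have husq : ∀ s : ℝ, (∑ t : Fin T, u t ^ 2) = ∑ t : Fin T, (d t - c t) ^ 2 := by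
    intro s; rfl
  have hconv : ConvexOn ℝ (Set.Icc (0:ℝ) 1) (fun s => F (c + s • u) - M / 2 * s ^ 2) := by
    apply seg_convex hF
    intro s hss
    have hmem : c + s • u ∈ cube T L := seg_mem_cube hc hd hss.1.le hss.2.le
    have := hs _ hmem u
    simpa [hM, hu] using this
  have h12 : ((1:ℝ)/2) ∈ Set.Icc (0:ℝ) 1 := by norm_num
  have key := hconv.2 (Set.left_mem_Icc.2 (by norm_num)) (Set.right_mem_Icc.2 (by norm_num))
    (by norm_num : (0:ℝ) ≤ 1/2) (by norm_num : (0:ℝ) ≤ 1/2) (by norm_num)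
  simp only [smul_eq_mul, mul_zero, mul_one, zero_add] at key
  have e0 : c + (0:ℝ) • u = c := by ext t; simp
  have e1 : c + (1:ℝ) • u = d := by ext t; simp [hu]
  have e12 : c + (1/2 : ℝ) • u = (1/2 : ℝ) • (c + d) := by
    ext t; simp [hu]; ring
  rw [e12] at key
  have key' : F ((1/2:ℝ) • (c + d)) - M / 2 * (1/2)^2 ≤
      (1/2) * (F (c + (0:ℝ) • u) - M/2*0^2) + (1/2) * (F (c + (1:ℝ) • u) - M/2*1^2) := key
  rw [e0, e1] at key'
  have : F ((1/2:ℝ) • (c + d)) ≤ (F c + F d)/2 - M/8 := by nlinarith [key']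
  calc F ((1/2:ℝ) • (c + d)) ≤ (F c + F d)/2 - M/8 := this
    _ = (F c + F d) / 2 - m / 8 * ∑ t : Fin T, (d t - c t) ^ 2 := by rw [hM]; ring

/-- Convexity of `F` on the cube when the Hessian form is nonnegative there. -/
lemma convexOn_cube {F : (Fin T → ℝ) → ℝ} (hF : ContDiff ℝ 2 F) {L : ℝ}
    (hs : ∀ a ∈ cube T L, ∀ u : Fin T → ℝ, 0 ≤ fderiv ℝ (fderiv ℝ F) a u u) :
    ConvexOn ℝ (cube T L) F := by
  refine ⟨convex_Icc _ _, ?_⟩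
  intro c hc d hd p q hp hq hpq
  set u : Fin T → ℝ := d - c with hu
  have hconv : ConvexOn ℝ (Set.Icc (0:ℝ) 1) (fun s => F (c + s • u) - (0:ℝ) / 2 * s ^ 2) := by
    apply seg_convex hF
    intro s hss
    simpa using hs _ (seg_mem_cube hc hd hss.1.le hss.2.le) u
  simp only [zero_div, zero_mul, sub_zero] at hconv
  have key := hconv.2 (Set.left_mem_Icc.2 (by norm_num)) (Set.right_mem_Icc.2 (by norm_num))
    hp hq hpq
  simp only [smul_eq_mul, mul_zero, mul_one, zero_add] at key
  have e0 : c + (0:ℝ) • u = c := by ext t; simp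
  have e1 : c + (1:ℝ) • u = d := by ext t; simp [hu]
  have eq : c + q • u = p • c + q • d := by
    ext t; simp only [Pi.add_apply, Pi.smul_apply, Pi.sub_apply, smul_eq_mul]
    have hp' : p = 1 - q := by linarith
    rw [hp', hu, Pi.sub_apply]; ring
  rw [e0, e1, eq] at key
  exact key

def vtx (T : ℕ) (L : ℝ) (s : Fin T → Bool) : Fin T → ℝ := fun t => if s t then L else -L

lemma vtx_mem {L : ℝ} (hL : 0 ≤ L) (s : Fin T → Bool) : vtx T L s ∈ cube T L := by
  rw [mem_cube_iff]
  intro t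
  unfold vtx
  split <;> constructor <;> linarith

lemma zero_mem_cube {L : ℝ} (hL : 0 ≤ L) : (fun _ : Fin T => (0:ℝ)) ∈ cube T L := by
  rw [mem_cube_iff]; intro t; constructor <;> simp [hL, neg_nonpos.2 hL]

lemma neg_mem_cube {L : ℝ} {c : Fin T → ℝ} (hc : c ∈ cube T L) : -c ∈ cube T L := by
  rw [mem_cube_iff] at hc ⊢
  intro t; have := hc t
  simp only [Pi.neg_apply]
  constructor <;> linarith [this.1, this.2]

lemma cube_subset_hull {L : ℝ} (hL : 0 ≤ L) :
    cube T L ⊆ convexHull ℝ (Set.pi Set.univ fun _ : Fin T => ({-L, L} : Set ℝ)) := by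
  intro c hc
  rw [convexHull_pi]
  intro t _
  rw [convexHull_pair, segment_eq_Icc (by linarith : -L ≤ L)]
  exact Set.mem_Icc.2 ⟨(mem_cube_iff.1 hc t).1, (mem_cube_iff.1 hc t).2⟩

lemma vertexSet_subset_cube {L : ℝ} (hL : 0 ≤ L) :
    (Set.pi Set.univ fun _ : Fin T => ({-L, L} : Set ℝ)) ⊆ cube T L := by
  intro y hy
  rw [mem_cube_iff]
  intro t
  rcases hy t (Set.mem_univ t) with h | h <;> rw [h] <;> constructor <;> linarith

lemma le_vertex_sum {F : (Fin T → ℝ) → ℝ} {L : ℝ} (hL : 0 ≤ L)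
    (hconv : ConvexOn ℝ (cube T L) F) {c : Fin T → ℝ} (hc : c ∈ cube T L) :
    F c ≤ ∑ s : Fin T → Bool, |F (vtx T L s)| := by
  obtain ⟨y, hy, hle⟩ := hconv.exists_ge_of_mem_convexHull (vertexSet_subset_cube hL)
    (cube_subset_hull hL hc)
  classical
  set s : Fin T → Bool := fun t => decide (y t = L) with hs
  have hyv : y = vtx T L s := by
    ext t
    have h' : y t = -L ∨ y t = L := by simpa using hy t (Set.mem_univ t)
    by_cases hLL : y t = L
    · have hst : s t = true := by simp [hs, hLL]
      simp [vtx, hst, hLL]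
    · have hst : s t = false := by simp [hs, hLL]
      have hyt : y t = -L := h'.resolve_right hLL
      simp [vtx, hst, hyt]
  calc F c ≤ F y := hle
    _ ≤ |F y| := le_abs_self _
    _ = |F (vtx T L s)| := by rw [hyv]
    _ ≤ ∑ s' : Fin T → Bool, |F (vtx T L s')| :=
        Finset.single_le_sum (f := fun s' => |F (vtx T L s')|)
          (fun _ _ => abs_nonneg _) (Finset.mem_univ s)

/-- Uniform domination of a convex function on the cube. -/
lemma abs_le_on_cube {F : (Fin T → ℝ) → ℝ} {L : ℝ} (hL : 0 ≤ L)
    (hconv : ConvexOn ℝ (cube T L) F) {c : Fin T → ℝ} (hc : c ∈ cube T L) :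
    |F c| ≤ (∑ s : Fin T → Bool, |F (vtx T L s)|) + 2 * |F (fun _ => 0)| := by
  have hup := le_vertex_sum hL hconv hc
  have hupneg := le_vertex_sum hL hconv (neg_mem_cube hc)
  have hmid := hconv.2 hc (neg_mem_cube hc)
    (by norm_num : (0:ℝ) ≤ 1/2) (by norm_num : (0:ℝ) ≤ 1/2) (by norm_num)
  have hmidval : (1/2 : ℝ) • c + (1/2 : ℝ) • (-c) = fun _ : Fin T => (0:ℝ) := by
    ext t; simp
  rw [hmidval] at hmid
  simp only [smul_eq_mul] at hmid
  rw [abs_le]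
  constructor
  · have h0 : -|F (fun _ : Fin T => (0:ℝ))| ≤ F (fun _ : Fin T => (0:ℝ)) := neg_abs_le _
    nlinarith [hmid, hupneg]
  · nlinarith [abs_nonneg (F (fun _ : Fin T => (0:ℝ)))]

section Meas
set_option linter.unusedSectionVars false

variable {L : ℝ} {P : Measure (PathSp T)} [IsProbabilityMeasure P]
variable {f : PathSp T → (Fin T → ℝ) → ℝ}

lemma FX_le (t : ℕ) : FX T t ≤ (inferInstance : MeasurableSpace (PathSp T)) := by
  apply iSup_le; intro i; apply iSup_le; intro _
  exact measurable_iff_comap_le.1 (measurable_pi_apply i)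

lemma pred_meas {a : Fin T → PathSp T → ℝ} (ha : PredictableControl T L a) :
    Measurable fun x => (fun t => a t x) :=
  measurable_pi_lambda _ fun t => ((ha t).1).mono (FX_le (t : ℕ)) le_rfl

lemma pred_cube {a : Fin T → PathSp T → ℝ} (ha : PredictableControl T L a) (x : PathSp T) :
    (fun t => a t x) ∈ cube T L :=
  mem_cube_iff.2 fun t => abs_le.1 ((ha t).2 x)

lemma aesm_piece (hint : ∀ a ∈ cube T L, Integrable (fun x => f x a) P)
    {b : PathSp T → (Fin T → ℤ)} (hb : Measurable b)
    {ρ : (Fin T → ℤ) → (Fin T → ℝ)} (hρ : ∀ z, ρ z ∈ cube T L) :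
    AEStronglyMeasurable (fun x => f x (ρ (b x))) P := by
  have h : ∀ z : Fin T → ℤ, AEStronglyMeasurable (fun x => f x (ρ z)) P :=
    fun z => (hint (ρ z) (hρ z)).aestronglyMeasurable
  set g : (Fin T → ℤ) → PathSp T → ℝ := fun z => (h z).mk _ with hgdef
  have hgm : ∀ z, StronglyMeasurable (g z) := fun z => (h z).stronglyMeasurable_mk
  have hge : ∀ z, (fun x => f x (ρ z)) =ᵐ[P] g z := fun z => (h z).ae_eq_mk
  have hsing : ∀ z : Fin T → ℤ, MeasurableSet {x : PathSp T | b x = z} := by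
    intro z
    have : {x : PathSp T | b x = z} = ⋂ t : Fin T, {x | b x t = z t} := by
      ext x; simp [funext_iff]
    rw [this]
    exact MeasurableSet.iInter fun t =>
      ((measurable_pi_apply t).comp hb) (measurableSet_singleton (z t))
  refine ⟨fun x => g (b x) x, ?_, ?_⟩
  · apply Measurable.stronglyMeasurable
    intro s hs
    have : (fun x => g (b x) x) ⁻¹' s =
        ⋃ z : Fin T → ℤ, ({x | b x = z} ∩ (g z) ⁻¹' s) := by
      ext x
      simp only [Set.mem_preimage, Set.mem_iUnion, Set.mem_inter_iff, Set.mem_setOf_eq]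
      exact ⟨fun hx => ⟨b x, rfl, hx⟩, fun ⟨z, hz, hx⟩ => by rw [hz]; exact hx⟩
    rw [this]
    exact MeasurableSet.iUnion fun z => (hsing z).inter ((hgm z).measurable hs)
  · have hall : ∀ᵐ x ∂P, ∀ z : Fin T → ℤ, f x (ρ z) = g z x := ae_all_iff.2 fun z => hge z
    filter_upwards [hall] with x hx
    exact hx (b x)

lemma aesm_control (hL : 0 ≤ L) (hC2 : ∀ x, ContDiff ℝ 2 (f x))
    (hint : ∀ a ∈ cube T L, Integrable (fun x => f x a) P)
    {a : PathSp T → (Fin T → ℝ)} (ha : Measurable a) (hacube : ∀ x, a x ∈ cube T L) :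
    AEStronglyMeasurable (fun x => f x (a x)) P := by
  set b : ℕ → PathSp T → (Fin T → ℤ) := fun n x t => ⌊a x t * (n + 1)⌋ with hbdef
  set ρ : ℕ → (Fin T → ℤ) → (Fin T → ℝ) :=
    fun n z t => max (-L) (min L ((z t : ℝ) / (n + 1))) with hρdef
  have hbm : ∀ n, Measurable (b n) :=
    fun n => measurable_pi_lambda _ fun t =>
      (((measurable_pi_apply t).comp ha).mul_const _).floor
  have hρc : ∀ n z, ρ n z ∈ cube T L := by
    intro n z
    rw [mem_cube_iff]
    intro t
    exact ⟨le_max_left _ _, max_le (by linarith) (min_le_left _ _)⟩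
  have htend : ∀ x, Tendsto (fun n => ρ n (b n x)) atTop (𝓝 (a x)) := by
    intro x
    rw [tendsto_pi_nhds]
    intro t
    have hy := mem_cube_iff.1 (hacube x) t
    set y := a x t with hy'
    have hbound : ∀ n : ℕ, y - 1 / (n + 1) ≤ ρ n (b n x) t ∧ ρ n (b n x) t ≤ y := by
      intro n
      have hn : (0:ℝ) < n + 1 := by positivity
      have hfl : (⌊y * (n + 1)⌋ : ℝ) / (n + 1) ≤ y := by
        rw [div_le_iff₀ hn]
        exact Int.floor_le _
      have hfl2 : y - 1 / (n + 1) < (⌊y * (n + 1)⌋ : ℝ) / (n + 1) := by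
        rw [sub_lt_iff_lt_add, ← add_div, lt_div_iff₀ hn]
        linarith [Int.lt_floor_add_one (y * (n + 1))]
      have hmin : min L ((⌊y * (n + 1)⌋ : ℝ) / (n + 1)) = (⌊y * (n + 1)⌋ : ℝ) / (n + 1) :=
        min_eq_right (le_trans hfl hy.2)
      constructor
      · simp only [hρdef, hbdef, ← hy', hmin]
        calc y - 1 / (n + 1) ≤ (⌊y * (n + 1)⌋ : ℝ) / (n + 1) := hfl2.le
          _ ≤ max (-L) ((⌊y * (n + 1)⌋ : ℝ) / (n + 1)) := le_max_right _ _
      · simp only [hρdef, hbdef, ← hy', hmin]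
        exact max_le (by linarith [hy.1]) hfl
    have h1 : Tendsto (fun n : ℕ => y - 1 / (n + 1 : ℝ)) atTop (𝓝 y) := by
      have := tendsto_one_div_add_atTop_nhds_zero_nat (𝕜 := ℝ)
      have := (tendsto_const_nhds (x := y) (f := atTop (α := ℕ))).sub this
      simpa using this
    exact tendsto_of_tendsto_of_tendsto_of_le_of_le h1 tendsto_const_nhds
      (fun n => (hbound n).1) (fun n => (hbound n).2)
  apply aestronglyMeasurable_of_tendsto_ae atTop
    (fun n => aesm_piece hint (hbm n) (hρc n))
  filter_upwards [] with x
  exact ((hC2 x).continuous.tendsto (a x)).comp (htend x)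

end Meas
end UOpt
end UOptAux
open UOpt Topology

/-- Lemma 3.3: existence and uniqueness (up to P-a.s. equality) of the
optimal predictable control under strong convexity. -/
theorem unique_optimizer
    (T : ℕ) (L : ℝ) (hL : 0 < L)
    (P : Measure (PathSp T)) [IsProbabilityMeasure P]
    (f : PathSp T → (Fin T → ℝ) → ℝ)
    (hC2 : ∀ x, ContDiff ℝ 2 (f x))
    (ε : PathSp T → ℝ) (hεm : Measurable ε) (hεpos : ∀ᵐ x ∂P, 0 < ε x)
    (hstrong : ∀ x, ∀ a ∈ Set.Icc (fun _ : Fin T => -L) (fun _ => L),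
      ∀ u : Fin T → ℝ,
        ((fderiv ℝ (fderiv ℝ (f x)) a) u) u ≥ ε x * ∑ t : Fin T, u t ^ 2)
    (hint : ∀ a ∈ Set.Icc (fun _ : Fin T => -L) (fun _ => L),
      Integrable (fun x => f x a) P) :
    ∃ a : Fin T → PathSp T → ℝ, PredictableControl T L a ∧
      (∫ x, f x (fun t => a t x) ∂P) = cval T L f P ∧
      ∀ b : Fin T → PathSp T → ℝ, PredictableControl T L b →
        (∫ x, f x (fun t => b t x) ∂P) = cval T L f P →
        ∀ t : Fin T, b t =ᵐ[P] a t := by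
  classical
  have hL' : (0:ℝ) ≤ L := hL.le
  have hcube_eq : cube T L = Set.Icc (fun _ : Fin T => -L) (fun _ => L) := rfl
  have hint' : ∀ a ∈ cube T L, Integrable (fun x => f x a) P := by
    rw [hcube_eq]; exact hint
  have hstrong' : ∀ x, ∀ a ∈ cube T L, ∀ u : Fin T → ℝ,
      ((fderiv ℝ (fderiv ℝ (f x)) a) u) u ≥ ε x * ∑ t : Fin T, u t ^ 2 := by
    rw [hcube_eq]; exact hstrong
  -- the truncated ellipticity
  set ε' : PathSp T → ℝ := fun x => min (ε x) 1 with hε'def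
  have hε'le1 : ∀ x, ε' x ≤ 1 := fun x => min_le_right _ _
  have hε'pos : ∀ᵐ x ∂P, 0 < ε' x := by
    filter_upwards [hεpos] with x hx
    exact lt_min hx one_pos
  have hε'm : Measurable ε' := hεm.min measurable_const
  have hε'strong : ∀ x, ∀ a ∈ cube T L, ∀ u : Fin T → ℝ,
      ((fderiv ℝ (fderiv ℝ (f x)) a) u) u ≥ ε' x * ∑ t : Fin T, u t ^ 2 := by
    intro x a ha u
    refine le_trans ?_ (hstrong' x a ha u)
    exact mul_le_mul_of_nonneg_right (min_le_left _ _)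
      (Finset.sum_nonneg fun t _ => sq_nonneg _)
  -- the dominating function
  set G : PathSp T → ℝ :=
    fun x => (∑ s : Fin T → Bool, |f x (vtx T L s)|) + 2 * |f x (fun _ => 0)| with hGdef
  have hGint : Integrable G P := by
    refine Integrable.add ?_ ?_
    · exact integrable_finset_sum _ fun s _ => (hint' _ (vtx_mem hL' s)).abs
    · exact ((hint' _ (zero_mem_cube hL')).abs.const_mul 2)
  have hGnonneg : ∀ x, 0 ≤ G x := by
    intro x
    refine add_nonneg (Finset.sum_nonneg fun s _ => abs_nonneg _)
      (by positivity)
  have hconv_ae : ∀ᵐ x ∂P, ConvexOn ℝ (cube T L) (f x) := by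
    filter_upwards [hεpos] with x hx
    refine convexOn_cube (hC2 x) fun a ha u => ?_
    refine le_trans ?_ (hstrong' x a ha u)
    positivity
  have hdom : ∀ᵐ x ∂P, ∀ c ∈ cube T L, |f x c| ≤ G x := by
    filter_upwards [hconv_ae] with x hx c hc
    exact abs_le_on_cube hL' hx hc
  -- the admissible value set
  set S : Set ℝ :=
    {v | ∃ a, PredictableControl T L a ∧ v = ∫ x, f x (fun t => a t x) ∂P} with hSdef
  set v : ℝ := sInf S with hvdef
  have hcval : cval T L f P = v := rfl
  -- integrability of the cost of any predictable control
  have hJint : ∀ a : Fin T → PathSp T → ℝ, PredictableControl T L a →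
      Integrable (fun x => f x (fun t => a t x)) P := by
    intro a ha
    refine Integrable.mono' hGint
      (aesm_control hL' hC2 hint' (pred_meas ha) (pred_cube ha)) ?_
    filter_upwards [hdom] with x hx
    exact hx _ (pred_cube ha x)
  have hSne : S.Nonempty := by
    refine ⟨∫ x, f x (fun t => (fun _ _ => (0:ℝ)) t x) ∂P, fun _ _ => (0:ℝ), ?_, rfl⟩
    exact fun t => ⟨measurable_const, fun x => by show |(0:ℝ)| ≤ L; rw [abs_zero]; exact hL'⟩
  have hSbdd : BddBelow S := by
    refine ⟨-∫ x, G x ∂P, ?_⟩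
    rintro w ⟨a, ha, rfl⟩
    have : ∫ x, -G x ∂P ≤ ∫ x, f x (fun t => a t x) ∂P := by
      refine integral_mono_ae hGint.neg (hJint a ha) ?_
      filter_upwards [hdom] with x hx
      have := hx _ (pred_cube ha x)
      have h2 := neg_abs_le (f x (fun t => a t x))
      linarith
    rwa [integral_neg] at this
  have hvle : ∀ a : Fin T → PathSp T → ℝ, PredictableControl T L a →
      v ≤ ∫ x, f x (fun t => a t x) ∂P := by
    intro a ha
    exact csInf_le hSbdd ⟨a, ha, rfl⟩
  -- the key strong-convexity estimate
  have key : ∀ a b : Fin T → PathSp T → ℝ, PredictableControl T L a →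
      PredictableControl T L b →
      Integrable (fun x => ε' x * ∑ t : Fin T, (b t x - a t x) ^ 2) P ∧
      (∫ x, ε' x * ∑ t : Fin T, (b t x - a t x) ^ 2 ∂P) ≤
        4 * ((∫ x, f x (fun t => a t x) ∂P) - v) +
        4 * ((∫ x, f x (fun t => b t x) ∂P) - v) := by
    intro a b ha hb
    set mid : Fin T → PathSp T → ℝ := fun t x => (a t x + b t x) / 2 with hmiddef
    have hmidpred : PredictableControl T L mid := by
      intro t
      refine ⟨((ha t).1.add (hb t).1).div_const 2, ?_⟩
      intro x
      have h1 := abs_le.1 ((ha t).2 x)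
      have h2 := abs_le.1 ((hb t).2 x)
      show |(a t x + b t x) / 2| ≤ L
      rw [abs_le]
      constructor
      · rw [le_div_iff₀ (by norm_num : (0:ℝ) < 2)]; linarith [h1.1, h2.1]
      · rw [div_le_iff₀ (by norm_num : (0:ℝ) < 2)]; linarith [h1.2, h2.2]
    have hpt : ∀ x, f x (fun t => mid t x) ≤
        (f x (fun t => a t x) + f x (fun t => b t x)) / 2
          - (ε' x * ∑ t : Fin T, (b t x - a t x) ^ 2) / 8 := by
      intro x
      have h := midpoint_ineq (hC2 x) (hε'strong x) (pred_cube ha x) (pred_cube hb x)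
      have e : (1/2 : ℝ) • ((fun t => a t x) + fun t => b t x) = fun t => mid t x := by
        ext t
        show (1/2 : ℝ) * (a t x + b t x) = (a t x + b t x) / 2
        ring
      rw [e] at h
      have e2 : (∑ t : Fin T, ((fun t => b t x) t - (fun t => a t x) t) ^ 2)
          = ∑ t : Fin T, (b t x - a t x) ^ 2 := by simp
      rw [e2] at h
      calc f x (fun t => mid t x) ≤
          (f x (fun t => a t x) + f x (fun t => b t x)) / 2
            - ε' x / 8 * ∑ t : Fin T, (b t x - a t x) ^ 2 := h
        _ = (f x (fun t => a t x) + f x (fun t => b t x)) / 2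
            - (ε' x * ∑ t : Fin T, (b t x - a t x) ^ 2) / 8 := by ring
    have hIa := hJint a ha
    have hIb := hJint b hb
    have hImid := hJint mid hmidpred
    have hrmeas : Measurable (fun x => ε' x * ∑ t : Fin T, (b t x - a t x) ^ 2) := by
      refine hε'm.mul (Finset.measurable_sum _ fun t _ => ?_)
      exact ((((hb t).1.mono (FX_le _) le_rfl).sub
        ((ha t).1.mono (FX_le _) le_rfl)).pow_const 2)
    have hrnonneg : ∀ᵐ x ∂P, 0 ≤ ε' x * ∑ t : Fin T, (b t x - a t x) ^ 2 := by
      filter_upwards [hε'pos] with x hx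
      exact mul_nonneg hx.le (Finset.sum_nonneg fun t _ => sq_nonneg _)
    have hgint : Integrable (fun x =>
        8 * ((f x (fun t => a t x) + f x (fun t => b t x)) / 2
          - f x (fun t => mid t x))) P :=
      (((hIa.add hIb).div_const 2).sub hImid).const_mul 8
    have hrint : Integrable (fun x => ε' x * ∑ t : Fin T, (b t x - a t x) ^ 2) P := by
      refine Integrable.mono' hgint (hrmeas.aestronglyMeasurable) ?_
      filter_upwards [hrnonneg] with x hx
      rw [Real.norm_eq_abs, abs_of_nonneg hx]
      have := hpt x
      linarith
    refine ⟨hrint, ?_⟩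
    have hmono : (∫ x, f x (fun t => mid t x) ∂P) ≤
        ∫ x, ((f x (fun t => a t x) + f x (fun t => b t x)) / 2
          - (ε' x * ∑ t : Fin T, (b t x - a t x) ^ 2) / 8) ∂P := by
      refine integral_mono hImid ?_ hpt
      exact ((hIa.add hIb).div_const 2).sub (hrint.div_const 8)
    have hIab : Integrable (fun x =>
        (f x (fun t => a t x) + f x (fun t => b t x)) / 2) P := (hIa.add hIb).div_const 2
    have hr8 : Integrable (fun x =>
        (ε' x * ∑ t : Fin T, (b t x - a t x) ^ 2) / 8) P := hrint.div_const 8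
    rw [integral_sub hIab hr8, integral_div, integral_div, integral_add hIa hIb] at hmono
    have hv := hvle mid hmidpred
    linarith
  -- minimizing sequence
  have hex : ∀ k : ℕ, ∃ a : Fin T → PathSp T → ℝ, PredictableControl T L a ∧
      (∫ x, f x (fun t => a t x) ∂P) < v + (1/16 : ℝ) ^ k := by
    intro k
    have hlt : sInf S < v + (1/16 : ℝ) ^ k := by
      rw [← hvdef]; exact lt_add_of_pos_right _ (by positivity)
    obtain ⟨w, hwS, hw⟩ := exists_lt_of_csInf_lt hSne hlt
    obtain ⟨a, ha, rfl⟩ := hwS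
    exact ⟨a, ha, hw⟩
  choose A hA hAlt using hex
  have hAv : ∀ k, v ≤ ∫ x, f x (fun t => A k t x) ∂P := fun k => hvle _ (hA k)
  have hDk : ∀ k : ℕ, (∫ x, ε' x * ∑ t : Fin T, (A (k+1) t x - A k t x) ^ 2 ∂P)
      ≤ 8 * (1/16 : ℝ) ^ k := by
    intro k
    have h := (key (A k) (A (k+1)) (hA k) (hA (k+1))).2
    have h1 := hAlt k; have h2 := hAlt (k+1); have h3 := hAv k; have h4 := hAv (k+1)
    have hp : (1/16:ℝ)^(k+1) ≤ (1/16:ℝ)^k := by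
      rw [pow_succ]
      nlinarith [pow_pos (show (0:ℝ) < 1/16 by norm_num) k]
    linarith
  have hΔmeas : ∀ (k : ℕ) (t : Fin T), Measurable (fun x => A (k+1) t x - A k t x) :=
    fun k t => ((hA (k+1) t).1.mono (FX_le _) le_rfl).sub ((hA k t).1.mono (FX_le _) le_rfl)
  have hrt : ∀ (k : ℕ) (t : Fin T),
      Integrable (fun x => ε' x * (A (k+1) t x - A k t x) ^ 2) P ∧
      (∫ x, ε' x * (A (k+1) t x - A k t x) ^ 2 ∂P) ≤ 8 * (1/16 : ℝ) ^ k := by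
    intro k t
    have hkk := key (A k) (A (k+1)) (hA k) (hA (k+1))
    have hle : ∀ᵐ x ∂P, ε' x * (A (k+1) t x - A k t x) ^ 2 ≤
        ε' x * ∑ t' : Fin T, (A (k+1) t' x - A k t' x) ^ 2 := by
      filter_upwards [hε'pos] with x hx
      exact mul_le_mul_of_nonneg_left
        (Finset.single_le_sum (f := fun t' => (A (k+1) t' x - A k t' x) ^ 2)
          (fun t' _ => sq_nonneg _) (Finset.mem_univ t)) hx.le
    have hm : Measurable (fun x => ε' x * (A (k+1) t x - A k t x) ^ 2) :=
      hε'm.mul ((hΔmeas k t).pow_const 2)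
    have hnn : ∀ᵐ x ∂P, 0 ≤ ε' x * (A (k+1) t x - A k t x) ^ 2 := by
      filter_upwards [hε'pos] with x hx
      exact mul_nonneg hx.le (sq_nonneg _)
    have hint1 : Integrable (fun x => ε' x * (A (k+1) t x - A k t x) ^ 2) P := by
      refine Integrable.mono' hkk.1 hm.aestronglyMeasurable ?_
      filter_upwards [hle, hnn] with x h1 h2
      rw [Real.norm_eq_abs, abs_of_nonneg h2]
      exact h1
    exact ⟨hint1, le_trans (integral_mono_ae hint1 hkk.1 hle) (hDk k)⟩
  have hu : ∀ (k : ℕ) (t : Fin T),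
      Integrable (fun x => ε' x * |A (k+1) t x - A k t x|) P ∧
      (∫ x, ε' x * |A (k+1) t x - A k t x| ∂P) ≤ 5 * (1/2 : ℝ) ^ k := by
    intro k t
    have h2k : (2:ℝ)^k * (1/2:ℝ)^k = 1 := by
      rw [← mul_pow]; norm_num
    have hptw : ∀ᵐ x ∂P, ε' x * |A (k+1) t x - A k t x| ≤
        ((2:ℝ)^k * (ε' x * (A (k+1) t x - A k t x) ^ 2) + (1/2:ℝ)^k) / 2 := by
      filter_upwards [hε'pos] with x hx
      set d : ℝ := A (k+1) t x - A k t x with hd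
      have hAM : |d| * 2 ≤ (2:ℝ)^k * d^2 + (1/2:ℝ)^k := by
        have hc : (0:ℝ) < (2:ℝ)^k := pow_pos (by norm_num) k
        set c := (2:ℝ)^k with hcdef
        set e := (1/2:ℝ)^k with hedef
        rcases abs_cases d with ⟨h, _⟩ | ⟨h, _⟩ <;> rw [h] <;>
          nlinarith [sq_nonneg (c * d - 1), sq_nonneg (c * d + 1), h2k, hc]
      have step1 : ε' x * |d| ≤ ε' x * (((2:ℝ)^k * d^2 + (1/2:ℝ)^k) / 2) := by
        apply mul_le_mul_of_nonneg_left _ hx.le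
        linarith
      have step2 : ε' x * (((2:ℝ)^k * d^2 + (1/2:ℝ)^k) / 2) ≤
          ((2:ℝ)^k * (ε' x * d^2) + (1/2:ℝ)^k) / 2 := by
        have h1 : (1/2:ℝ)^k * ε' x ≤ (1/2:ℝ)^k := by
          nlinarith [pow_nonneg (show (0:ℝ) ≤ 1/2 by norm_num) k, hε'le1 x]
        nlinarith
      linarith
    have hgm : Integrable (fun x =>
        ((2:ℝ)^k * (ε' x * (A (k+1) t x - A k t x) ^ 2) + (1/2:ℝ)^k) / 2) P :=
      (((hrt k t).1.const_mul _).add (integrable_const _)).div_const 2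
    have hm : Measurable (fun x => ε' x * |A (k+1) t x - A k t x|) :=
      hε'm.mul (hΔmeas k t).abs
    have hnn : ∀ᵐ x ∂P, 0 ≤ ε' x * |A (k+1) t x - A k t x| := by
      filter_upwards [hε'pos] with x hx
      exact mul_nonneg hx.le (abs_nonneg _)
    have hint1 : Integrable (fun x => ε' x * |A (k+1) t x - A k t x|) P := by
      refine Integrable.mono' hgm hm.aestronglyMeasurable ?_
      filter_upwards [hptw, hnn] with x h1 h2
      rw [Real.norm_eq_abs, abs_of_nonneg h2]
      exact h1
    refine ⟨hint1, ?_⟩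
    have hmono := integral_mono_ae hint1 hgm hptw
    have hIc : Integrable (fun x =>
        (2:ℝ)^k * (ε' x * (A (k+1) t x - A k t x) ^ 2)) P := (hrt k t).1.const_mul _
    rw [integral_div, integral_add hIc (integrable_const _), integral_const_mul _ _,
      integral_const] at hmono
    simp only [measure_univ, ENNReal.toReal_one, smul_eq_mul, one_mul, probReal_univ] at hmono
    have hnum : ((2:ℝ)^k * (8 * (1/16:ℝ)^k) + (1/2:ℝ)^k) / 2 ≤ 5 * (1/2:ℝ)^k := by
      have he : (2:ℝ)^k * (1/16:ℝ)^k = (1/8:ℝ)^k := by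
        rw [← mul_pow]; norm_num
      have hle : ((1:ℝ)/8)^k ≤ ((1:ℝ)/2)^k := by
        apply pow_le_pow_left₀ (by norm_num) (by norm_num)
      nlinarith [pow_nonneg (show (0:ℝ) ≤ 1/2 by norm_num) k]
    have hr2 := (hrt k t).2
    have h2pos : (0:ℝ) < (2:ℝ)^k := pow_pos (by norm_num) k
    calc (∫ x, ε' x * |A (k+1) t x - A k t x| ∂P)
        ≤ ((2:ℝ)^k * (∫ x, ε' x * (A (k+1) t x - A k t x) ^ 2 ∂P) + (1/2:ℝ)^k) / 2 := hmono
      _ ≤ ((2:ℝ)^k * (8 * (1/16:ℝ)^k) + (1/2:ℝ)^k) / 2 := by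
          have := mul_le_mul_of_nonneg_left hr2 h2pos.le
          linarith
      _ ≤ 5 * (1/2:ℝ)^k := hnum
  -- almost sure convergence of the minimizing sequence
  have hconvae : ∀ᵐ x ∂P, ∀ t : Fin T,
      ∃ ℓ : ℝ, Tendsto (fun k => A k t x) atTop (𝓝 ℓ) := by
    rw [ae_all_iff]
    intro t
    have hum : ∀ k : ℕ, Measurable (fun x => ε' x * |A (k+1) t x - A k t x|) :=
      fun k => hε'm.mul (hΔmeas k t).abs
    have hunn : ∀ k : ℕ, ∀ᵐ x ∂P, 0 ≤ ε' x * |A (k+1) t x - A k t x| := by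
      intro k
      filter_upwards [hε'pos] with x hx
      exact mul_nonneg hx.le (abs_nonneg _)
    have hsum_lt : (∫⁻ x, ∑' k : ℕ, ENNReal.ofReal (ε' x * |A (k+1) t x - A k t x|) ∂P) < ⊤ := by
      rw [lintegral_tsum (fun k => ((hum k).ennreal_ofReal).aemeasurable)]
      have hsummable : Summable (fun k : ℕ => 5 * (1/2:ℝ)^k) :=
        (summable_geometric_of_lt_one (by norm_num) (by norm_num)).mul_left 5
      calc (∑' k : ℕ, ∫⁻ x, ENNReal.ofReal (ε' x * |A (k+1) t x - A k t x|) ∂P)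
          ≤ ∑' k : ℕ, ENNReal.ofReal (5 * (1/2:ℝ)^k) := by
            refine ENNReal.tsum_le_tsum fun k => ?_
            rw [← ofReal_integral_eq_lintegral_ofReal (hu k t).1 (hunn k)]
            exact ENNReal.ofReal_le_ofReal (hu k t).2
        _ = ENNReal.ofReal (∑' k : ℕ, 5 * (1/2:ℝ)^k) :=
            (ENNReal.ofReal_tsum_of_nonneg (fun k => by positivity) hsummable).symm
        _ < ⊤ := ENNReal.ofReal_lt_top
    have hae := ae_lt_top (Measurable.ennreal_tsum fun k => (hum k).ennreal_ofReal) hsum_lt.ne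
    filter_upwards [hae, hε'pos] with x hx hx2
    have hsum1 : Summable (fun k : ℕ =>
        (ENNReal.ofReal (ε' x * |A (k+1) t x - A k t x|)).toReal) :=
      ENNReal.summable_toReal hx.ne
    have hsum2 : Summable (fun k : ℕ => ε' x * |A (k+1) t x - A k t x|) := by
      refine hsum1.congr fun k => ?_
      exact ENNReal.toReal_ofReal (mul_nonneg hx2.le (abs_nonneg _))
    have hsum3 : Summable (fun k : ℕ => |A (k+1) t x - A k t x|) := by
      have h := hsum2.mul_left (ε' x)⁻¹
      refine h.congr fun k => ?_
      rw [inv_mul_cancel_left₀ hx2.ne']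
    have hcauchy : CauchySeq (fun k => A k t x) := by
      apply cauchySeq_of_summable_dist
      refine hsum3.congr fun k => ?_
      rw [Real.dist_eq, abs_sub_comm]
    exact cauchySeq_tendsto_of_complete hcauchy
  -- the limit control
  set astar : Fin T → PathSp T → ℝ :=
    fun t x => max (-L) (min L (limsup (fun k => A k t x) atTop)) with hastardef
  have hastarpred : PredictableControl T L astar := by
    intro t
    constructor
    · have hAm : ∀ k : ℕ, Measurable[FX T (t:ℕ)] (fun x => A k t x) := fun k => (hA k t).1
      exact measurable_const.max (measurable_const.min (Measurable.limsup hAm))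
    · intro x
      rw [abs_le]
      exact ⟨le_max_left _ _, max_le (by linarith) (min_le_left _ _)⟩
  have htendstar : ∀ᵐ x ∂P, ∀ t : Fin T,
      Tendsto (fun k => A k t x) atTop (𝓝 (astar t x)) := by
    filter_upwards [hconvae] with x hx t
    obtain ⟨ℓ, hℓ⟩ := hx t
    have hub : ℓ ≤ L :=
      le_of_tendsto hℓ (Eventually.of_forall fun k => (abs_le.1 ((hA k t).2 x)).2)
    have hlb : -L ≤ ℓ :=
      ge_of_tendsto hℓ (Eventually.of_forall fun k => (abs_le.1 ((hA k t).2 x)).1)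
    have heq : astar t x = ℓ := by
      show max (-L) (min L (limsup (fun k => A k t x) atTop)) = ℓ
      rw [hℓ.limsup_eq, min_eq_right hub, max_eq_right hlb]
    rw [heq]
    exact hℓ
  have htendint : Tendsto (fun k => ∫ x, f x (fun t => A k t x) ∂P) atTop
      (𝓝 (∫ x, f x (fun t => astar t x) ∂P)) := by
    refine tendsto_integral_of_dominated_convergence G
      (fun k => aesm_control hL' hC2 hint' (pred_meas (hA k)) (pred_cube (hA k))) hGint ?_ ?_
    · intro k
      filter_upwards [hdom] with x hx
      rw [Real.norm_eq_abs]
      exact hx _ (pred_cube (hA k) x)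
    · filter_upwards [htendstar] with x hx
      have h1 : Tendsto (fun k => (fun t => A k t x)) atTop (𝓝 (fun t => astar t x)) :=
        tendsto_pi_nhds.2 hx
      exact ((hC2 x).continuous.tendsto _).comp h1
  have htendv : Tendsto (fun k => ∫ x, f x (fun t => A k t x) ∂P) atTop (𝓝 v) := by
    have hpow : Tendsto (fun k : ℕ => (1/16:ℝ)^k) atTop (𝓝 0) :=
      tendsto_pow_atTop_nhds_zero_of_lt_one (by norm_num) (by norm_num)
    have h0 : Tendsto (fun k : ℕ => v + (1/16:ℝ)^k) atTop (𝓝 v) := by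
      have := tendsto_const_nhds (x := v) (f := atTop (α := ℕ)) |>.add hpow
      simpa using this
    exact tendsto_of_tendsto_of_tendsto_of_le_of_le
      (tendsto_const_nhds) h0 hAv (fun k => (hAlt k).le)
  have hJstar : (∫ x, f x (fun t => astar t x) ∂P) = v :=
    tendsto_nhds_unique htendint htendv
  refine ⟨astar, hastarpred, by rw [hJstar, hcval], ?_⟩
  -- uniqueness
  intro b hb hbv
  rw [hcval] at hbv
  have hk := key astar b hastarpred hb
  have hzero : (∫ x, ε' x * ∑ t : Fin T, (b t x - astar t x) ^ 2 ∂P) ≤ 0 := by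
    have h2 := hk.2
    rw [hJstar, hbv] at h2
    linarith
  have hnn : ∀ᵐ x ∂P, 0 ≤ ε' x * ∑ t : Fin T, (b t x - astar t x) ^ 2 := by
    filter_upwards [hε'pos] with x hx
    exact mul_nonneg hx.le (Finset.sum_nonneg fun t _ => sq_nonneg _)
  have hzero2 : (fun x => ε' x * ∑ t : Fin T, (b t x - astar t x) ^ 2) =ᵐ[P] 0 := by
    have h1 : (∫ x, ε' x * ∑ t : Fin T, (b t x - astar t x) ^ 2 ∂P) = 0 :=
      le_antisymm hzero (integral_nonneg_of_ae hnn)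
    exact (integral_eq_zero_iff_of_nonneg_ae hnn hk.1).1 h1
  have hae2 : ∀ᵐ x ∂P, ∀ t : Fin T, b t x = astar t x := by
    filter_upwards [hzero2, hε'pos] with x hx hx2
    intro t
    have hx' : ε' x * ∑ t : Fin T, (b t x - astar t x) ^ 2 = 0 := hx
    have hsum0 : ∑ t' : Fin T, (b t' x - astar t' x) ^ 2 = 0 := by
      rcases mul_eq_zero.1 hx' with h | h
      · exact absurd h hx2.ne'
      · exact h
    have ht0 := (Finset.sum_eq_zero_iff_of_nonneg
      (fun t' _ => sq_nonneg (b t' x - astar t' x))).1 hsum0 t (Finset.mem_univ t)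
    have := sq_eq_zero_iff.1 ht0
    linarith [this]
  intro t
  filter_upwards [hae2] with x hx
  exact hx t


end
end

section
/- Bicausal projection of controls: let π be a bicausal coupling between P, Q ∈ 𝒫_p(ℝ^T) and a = (a_t)_{t=1}^T a predictable control under X (a_t is ℱ_{t-1}^X-measurable, |a_t| ≤ L). Define b_t := E_π[a_t(X) | ℱ_T^Y]. Then b_t is ℱ_{t-1}^Y-measurable and |b_t| ≤ L; i.e., b is a predictable control under Y bounded by L. Moreover, if f(y,·) is convex for each y, then E_Q[f(Y, b(Y))] ≤ E_π[f(Y, a(X))]. -/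
open MeasureTheory ProbabilityTheory Filter Set

noncomputable section

namespace BCPaux

open MeasureTheory ProbabilityTheory Filter Set

lemma FX_le (T t : ℕ) : FX T t ≤ (inferInstance : MeasurableSpace (PathSp T)) := by
  rw [FX]
  refine iSup_le fun i => iSup_le fun _ => ?_
  have h : Measurable (fun x : PathSp T => x i) := measurable_pi_apply i
  exact h.comap_le

lemma FX_mono (T : ℕ) {s t : ℕ} (h : s ≤ t) : FX T s ≤ FX T t := by
  rw [FX, FX]
  refine iSup_le fun i => iSup_le fun hi => ?_
  exact le_iSup_of_le i (le_iSup_of_le (lt_of_lt_of_le hi h) le_rfl)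

lemma measurable_coord (T : ℕ) (i : Fin T) : Measurable[FX T T] (fun y : PathSp T => y i) := by
  rw [measurable_iff_comap_le, FX]
  exact le_iSup_of_le i (le_iSup_of_le i.isLt le_rfl)

lemma prodY_le (T t : ℕ) :
    prodY T t ≤ (inferInstance : MeasurableSpace (PathSp T × PathSp T)) :=
  (MeasurableSpace.comap_mono (FX_le T t)).trans measurable_snd.comap_le

lemma prodY_mono (T : ℕ) {s t : ℕ} (h : s ≤ t) : prodY T s ≤ prodY T t :=
  MeasurableSpace.comap_mono (FX_mono T h)

/-- A function measurable w.r.t. `comap snd m` depends only on the second coordinate. -/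
lemma comap_snd_factor {T : ℕ} {m : MeasurableSpace (PathSp T)}
    {g : PathSp T × PathSp T → ℝ}
    (hg : Measurable[MeasurableSpace.comap Prod.snd m] g) (z : PathSp T × PathSp T) :
    g z = g ((fun _ : Fin T => (0:ℝ)), z.2) := by
  obtain ⟨B, -, hB⟩ := hg (measurableSet_singleton (g z))
  have hz : z ∈ Prod.snd ⁻¹' B := by rw [hB]; exact rfl
  have hz' : ((fun _ : Fin T => (0:ℝ)), z.2) ∈ Prod.snd ⁻¹' B := hz
  rw [hB] at hz'
  exact hz'.symm

lemma measurable_section {T : ℕ} {m : MeasurableSpace (PathSp T)} :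
    Measurable[m, MeasurableSpace.comap Prod.snd m]
      (fun y : PathSp T => ((fun _ : Fin T => (0:ℝ)), y)) := by
  intro s hs
  obtain ⟨B, hB, rfl⟩ := hs
  exact hB

end BCPaux

namespace BCPaux

open MeasureTheory ProbabilityTheory Filter Set
open scoped Topology

lemma integrable_comp_of_bound {α γ : Type*} [m0 : MeasurableSpace α] [mγ : MeasurableSpace γ]
    (μ : Measure α) [IsProbabilityMeasure μ] {X : α → γ} (hX : Measurable X)
    {φ : γ → ℝ} (hφ : Measurable φ) {C : ℝ} (hC : ∀ x, ‖φ x‖ ≤ C) :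
    Integrable (fun ω => φ (X ω)) μ :=
  (integrable_const C).mono' ((hφ.comp hX).aestronglyMeasurable)
    (Eventually.of_forall fun ω => hC (X ω))

/-- Extension of an equality of conditional expectations from indicators to
bounded measurable functions. -/
lemma condExp_comp_eq_of_indicator_eq {α γ : Type*} {m m' : MeasurableSpace α}
    [m0 : MeasurableSpace α]
    [mγ : MeasurableSpace γ] (μ : Measure α) [IsProbabilityMeasure μ]
    (hm : m ≤ m0) (hm' : m' ≤ m0)
    {X : α → γ} (hX : Measurable X)
    (hind : ∀ A : Set γ, MeasurableSet A →
      (μ[fun ω => A.indicator (fun _ => (1:ℝ)) (X ω) | m]) =ᵐ[μ]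
      (μ[fun ω => A.indicator (fun _ => (1:ℝ)) (X ω) | m']))
    (φ : γ → ℝ) (hφ : StronglyMeasurable φ) {C : ℝ} (hC : 0 ≤ C) (hφb : ∀ x, ‖φ x‖ ≤ C) :
    (μ[fun ω => φ (X ω) | m]) =ᵐ[μ] (μ[fun ω => φ (X ω) | m']) := by
  haveI : IsFiniteMeasure (μ.trim hm) := isFiniteMeasure_trim hm
  haveI : IsFiniteMeasure (μ.trim hm') := isFiniteMeasure_trim hm'
  -- Step A: simple functions
  have hsimple : ∀ ψ : SimpleFunc γ ℝ,
      (μ[fun ω => ψ (X ω) | m]) =ᵐ[μ] (μ[fun ω => ψ (X ω) | m']) := by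
    intro ψ
    induction ψ using SimpleFunc.induction with
    | const c hs =>
      rename_i s
      have h1 : (fun ω => (SimpleFunc.piecewise s hs (SimpleFunc.const _ c)
          (SimpleFunc.const _ (0:ℝ))) (X ω))
          = c • fun ω => s.indicator (fun _ => (1:ℝ)) (X ω) := by
        funext ω
        by_cases hx : X ω ∈ s <;>
          simp [SimpleFunc.piecewise_apply, hx]
      rw [h1]
      calc (μ[c • fun ω => s.indicator (fun _ => (1:ℝ)) (X ω) | m])
          =ᵐ[μ] c • (μ[fun ω => s.indicator (fun _ => (1:ℝ)) (X ω) | m]) := condExp_smul c _ m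
        _ =ᵐ[μ] c • (μ[fun ω => s.indicator (fun _ => (1:ℝ)) (X ω) | m']) :=
            (hind s hs).const_smul c
        _ =ᵐ[μ] (μ[c • fun ω => s.indicator (fun _ => (1:ℝ)) (X ω) | m']) :=
            (condExp_smul c _ m').symm
    | add hdisj h₁ h₂ =>
      rename_i ψ₁ ψ₂
      obtain ⟨C₁, hC₁⟩ := ψ₁.exists_forall_norm_le
      obtain ⟨C₂, hC₂⟩ := ψ₂.exists_forall_norm_le
      have hint₁ := integrable_comp_of_bound μ hX ψ₁.measurable hC₁
      have hint₂ := integrable_comp_of_bound μ hX ψ₂.measurable hC₂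
      have hadd : (fun ω => (ψ₁ + ψ₂) (X ω))
          = (fun ω => ψ₁ (X ω)) + fun ω => ψ₂ (X ω) := by
        funext ω; simp
      rw [hadd]
      calc (μ[(fun ω => ψ₁ (X ω)) + fun ω => ψ₂ (X ω) | m])
          =ᵐ[μ] (μ[fun ω => ψ₁ (X ω) | m]) + (μ[fun ω => ψ₂ (X ω) | m]) :=
            condExp_add hint₁ hint₂ m
        _ =ᵐ[μ] (μ[fun ω => ψ₁ (X ω) | m']) + (μ[fun ω => ψ₂ (X ω) | m']) := h₁.add h₂
        _ =ᵐ[μ] (μ[(fun ω => ψ₁ (X ω)) + fun ω => ψ₂ (X ω) | m']) :=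
            (condExp_add hint₁ hint₂ m').symm
  -- Step B: approximation
  set ψn := fun n => hφ.approxBounded C n with hψn
  have hψb : ∀ n x, ‖ψn n x‖ ≤ C := fun n x => hφ.norm_approxBounded_le hC n x
  have hφint := integrable_comp_of_bound μ hX hφ.measurable hφb
  have hψint : ∀ n, Integrable (fun ω => ψn n (X ω)) μ :=
    fun n => integrable_comp_of_bound μ hX (ψn n).measurable (hψb n)
  set u := μ[fun ω => φ (X ω) | m] with hu
  set u' := μ[fun ω => φ (X ω) | m'] with hu'
  have key : ∀ n, ∫ ω, |u ω - u' ω| ∂μ ≤ 2 * ∫ ω, |φ (X ω) - ψn n (X ω)| ∂μ := by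
    intro n
    set vn := μ[fun ω => ψn n (X ω) | m] with hvn
    set vn' := μ[fun ω => ψn n (X ω) | m'] with hvn'
    have e1 : u - vn =ᵐ[μ] μ[fun ω => φ (X ω) - ψn n (X ω) | m] :=
      (condExp_sub (m := m) (μ := μ) hφint (hψint n)).symm
    have e1' : u' - vn' =ᵐ[μ] μ[fun ω => φ (X ω) - ψn n (X ω) | m'] :=
      (condExp_sub (m := m') (μ := μ) hφint (hψint n)).symm
    have hi0 : Integrable (fun ω => |u ω - u' ω|) μ :=
      (integrable_condExp.sub integrable_condExp).abs
    have hi1 : Integrable (fun ω => |u ω - vn ω|) μ :=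
      (integrable_condExp.sub integrable_condExp).abs
    have hi2 : Integrable (fun ω => |vn ω - vn' ω|) μ :=
      (integrable_condExp.sub integrable_condExp).abs
    have hi3 : Integrable (fun ω => |vn' ω - u' ω|) μ :=
      (integrable_condExp.sub integrable_condExp).abs
    have hi12 : Integrable (fun ω => |u ω - vn ω| + |vn ω - vn' ω|) μ := hi1.add hi2
    have hi123 : Integrable
        (fun ω => |u ω - vn ω| + |vn ω - vn' ω| + |vn' ω - u' ω|) μ := hi12.add hi3
    have hb1 : ∫ ω, |u ω - vn ω| ∂μ ≤ ∫ ω, |φ (X ω) - ψn n (X ω)| ∂μ := by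
      calc ∫ ω, |u ω - vn ω| ∂μ
          = ∫ ω, |(μ[fun ω => φ (X ω) - ψn n (X ω) | m]) ω| ∂μ := by
            refine integral_congr_ae ?_
            filter_upwards [e1] with ω hω
            rw [← hω]; rfl
        _ ≤ ∫ ω, |φ (X ω) - ψn n (X ω)| ∂μ := integral_abs_condExp_le _
    have hb3 : ∫ ω, |vn' ω - u' ω| ∂μ ≤ ∫ ω, |φ (X ω) - ψn n (X ω)| ∂μ := by
      calc ∫ ω, |vn' ω - u' ω| ∂μ
          = ∫ ω, |(μ[fun ω => φ (X ω) - ψn n (X ω) | m']) ω| ∂μ := by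
            refine integral_congr_ae ?_
            filter_upwards [e1'] with ω hω
            rw [← hω, abs_sub_comm]; rfl
        _ ≤ ∫ ω, |φ (X ω) - ψn n (X ω)| ∂μ := integral_abs_condExp_le _
    have hb2 : ∫ ω, |vn ω - vn' ω| ∂μ = 0 := by
      have h : ∀ᵐ ω ∂μ, |vn ω - vn' ω| = (0:ℝ) := by
        filter_upwards [hsimple (ψn n)] with ω hω
        rw [show vn ω - vn' ω = 0 by rw [hvn, hvn', hω]; ring]
        exact abs_zero
      rw [integral_congr_ae h, integral_zero]
    calc ∫ ω, |u ω - u' ω| ∂μ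
        ≤ ∫ ω, (|u ω - vn ω| + |vn ω - vn' ω| + |vn' ω - u' ω|) ∂μ := by
          refine integral_mono_ae hi0 hi123 ?_
          filter_upwards with ω
          have h : u ω - u' ω = (u ω - vn ω) + (vn ω - vn' ω) + (vn' ω - u' ω) := by ring
          rw [h]
          exact (abs_add_le _ _).trans (add_le_add_left (abs_add_le _ _) _)
      _ = ∫ ω, |u ω - vn ω| ∂μ + ∫ ω, |vn ω - vn' ω| ∂μ + ∫ ω, |vn' ω - u' ω| ∂μ := by
          rw [integral_add hi12 hi3, integral_add hi1 hi2]
      _ ≤ ∫ ω, |φ (X ω) - ψn n (X ω)| ∂μ + 0 + ∫ ω, |φ (X ω) - ψn n (X ω)| ∂μ :=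
          add_le_add (add_le_add hb1 (le_of_eq hb2)) hb3
      _ = 2 * ∫ ω, |φ (X ω) - ψn n (X ω)| ∂μ := by ring
  -- limit
  have htend : Tendsto (fun n => ∫ ω, |φ (X ω) - ψn n (X ω)| ∂μ) atTop (𝓝 (0:ℝ)) := by
    have h0 : (0:ℝ) = ∫ _ω : α, (0:ℝ) ∂μ := (integral_zero _ _).symm
    rw [h0]
    refine tendsto_integral_of_dominated_convergence (fun _ => 2 * C) ?_ ?_ ?_ ?_
    · exact fun n => ((hφint.sub (hψint n)).abs).aestronglyMeasurable
    · exact integrable_const _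
    · intro n
      filter_upwards with ω
      rw [Real.norm_eq_abs, abs_abs]
      calc |φ (X ω) - ψn n (X ω)| ≤ |φ (X ω)| + |ψn n (X ω)| := abs_sub _ _
        _ ≤ C + C := add_le_add (hφb (X ω)) (hψb n (X ω))
        _ = 2 * C := by ring
    · filter_upwards with ω
      have h1 := hφ.tendsto_approxBounded_of_norm_le (hφb (X ω))
      have h2 : Tendsto (fun n => φ (X ω) - ψn n (X ω)) atTop (𝓝 (φ (X ω) - φ (X ω))) :=
        tendsto_const_nhds.sub h1
      rw [sub_self] at h2
      simpa using h2.abs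
  have hle0 : ∫ ω, |u ω - u' ω| ∂μ ≤ 0 := by
    have h2 : Tendsto (fun n => 2 * ∫ ω, |φ (X ω) - ψn n (X ω)| ∂μ) atTop (𝓝 (2 * 0 : ℝ)) :=
      htend.const_mul 2
    rw [mul_zero] at h2
    exact ge_of_tendsto h2 (Eventually.of_forall key)
  have hi0 : Integrable (fun ω => |u ω - u' ω|) μ :=
    (integrable_condExp.sub integrable_condExp).abs
  have hzero : ∫ ω, |u ω - u' ω| ∂μ = 0 :=
    le_antisymm hle0 (integral_nonneg fun ω => abs_nonneg _)
  have hae := (integral_eq_zero_iff_of_nonneg (fun ω => abs_nonneg (u ω - u' ω)) hi0).mp hzero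
  filter_upwards [hae] with ω hω
  have h1 : |u ω - u' ω| = 0 := hω
  have h2 := abs_eq_zero.mp h1
  linarith

end BCPaux

/-- bicausal projection of controls: for a bicausal coupling π and a
predictable control a under X, b_t := E_π[a_t(X)|ℱ_T^Y] is ℱ_{t-1}^Y-measurable and
bounded by L (i.e. a predictable control under Y), and if f(y,·) is convex then
E_Q[f(Y,b(Y))] ≤ E_π[f(Y,a(X))]. -/
theorem bicausal_control_projection
    (T : ℕ) (p L : ℝ) (hp : 1 < p) (hL : 0 < L)
    (P Q : Measure (PathSp T)) [IsProbabilityMeasure P] [IsProbabilityMeasure Q]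
    (hPm : FiniteMoment p P) (hQm : FiniteMoment p Q)
    (π : Measure (PathSp T × PathSp T)) [IsProbabilityMeasure π]
    (hπ : IsCoupling π P Q) (hbc : Bicausal T π)
    (a : Fin T → PathSp T → ℝ) (ha : PredictableControl T L a)
    (f : PathSp T → (Fin T → ℝ) → ℝ)
    (hconv : ∀ y, ConvexOn ℝ Set.univ (f y))
    (hfcont : Continuous fun z : PathSp T × (Fin T → ℝ) => f z.1 z.2)
    (hint1 : Integrable (fun z => f z.2 (fun t => a t z.1)) π)
    (hint2 : ∀ b : Fin T → PathSp T → ℝ, PredictableControl T L b →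
      Integrable (fun y => f y (fun t => b t y)) Q) :
    ∃ b : Fin T → PathSp T → ℝ, PredictableControl T L b ∧
      (∀ t : Fin T,
        (fun z : PathSp T × PathSp T => b t z.2) =ᵐ[π]
          π[fun z : PathSp T × PathSp T => a t z.1 | prodY T T]) ∧
      (∫ y, f y (fun t => b t y) ∂Q) ≤ ∫ z, f z.2 (fun t => a t z.1) ∂π := by
  classical
  open scoped Topology in
  have hmT : prodY T T ≤ (inferInstance : MeasurableSpace (PathSp T × PathSp T)) :=
    BCPaux.prodY_le T T
  haveI : IsFiniteMeasure (π.trim hmT) := isFiniteMeasure_trim hmT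
  -- the conditional expectations given the smaller σ-algebras
  set g : Fin T → (PathSp T × PathSp T) → ℝ :=
    fun t => π[fun z : PathSp T × PathSp T => a t z.1 | prodY T (t : ℕ)] with hgdef
  have hgm : ∀ t : Fin T,
      Measurable[MeasurableSpace.comap Prod.snd (FX T (t : ℕ))] (g t) := fun t =>
    (stronglyMeasurable_condExp (m := prodY T (t : ℕ))).measurable
  set h : Fin T → PathSp T → ℝ :=
    fun t y => g t ((fun _ : Fin T => (0:ℝ)), y) with hhdef
  set b : Fin T → PathSp T → ℝ := fun t y => max (-L) (min L (h t y)) with hbdef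
  -- predictability of b
  have hbm : ∀ t : Fin T, Measurable[FX T (t : ℕ)] (b t) := by
    intro t
    have h1 : Measurable[FX T (t : ℕ)] (h t) :=
      (hgm t).comp (BCPaux.measurable_section (m := FX T (t : ℕ)))
    exact measurable_const.max (measurable_const.min h1)
  have hbound : ∀ (t : Fin T) (y : PathSp T), |b t y| ≤ L := by
    intro t y
    refine abs_le.mpr ⟨?_, ?_⟩
    · exact le_max_left _ _
    · exact max_le (by linarith) (min_le_left _ _)
  have hbpred : PredictableControl T L b := fun t => ⟨hbm t, hbound t⟩
  -- step 3: the bicausality identity for a t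
  have hstep3 : ∀ t : Fin T,
      (π[fun z : PathSp T × PathSp T => a t z.1 | prodY T T]) =ᵐ[π] g t := by
    intro t
    refine BCPaux.condExp_comp_eq_of_indicator_eq (mγ := FX T (t : ℕ)) π
      (BCPaux.prodY_le T T) (BCPaux.prodY_le T (t : ℕ))
      (X := Prod.fst) (measurable_fst.mono le_rfl (BCPaux.FX_le T (t : ℕ)))
      (fun A hA => hbc.2 (t : ℕ) (le_of_lt t.isLt) A hA)
      (a t) ((ha t).1.stronglyMeasurable) hL.le
      (fun x => by simpa [Real.norm_eq_abs] using (ha t).2 x)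
  -- boundedness of the conditional expectation
  have hbdd : ∀ t : Fin T, ∀ᵐ z ∂π, |g t z| ≤ L := by
    intro t
    have h1 : ∀ᵐ z ∂π, |a t z.1| ≤ (L.toNNReal : ℝ) := by
      filter_upwards with z
      rw [Real.coe_toNNReal L hL.le]; exact (ha t).2 z.1
    have h2 := ae_bdd_condExp_of_ae_bdd (m := prodY T (t : ℕ)) h1
    filter_upwards [h2] with z hz
    rwa [Real.coe_toNNReal L hL.le] at hz
  -- b composed with snd agrees a.e. with g
  have hbeq : ∀ t : Fin T, (fun z : PathSp T × PathSp T => b t z.2) =ᵐ[π] g t := by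
    intro t
    have hfac : ∀ z : PathSp T × PathSp T, g t z = h t z.2 := fun z =>
      BCPaux.comap_snd_factor (m := FX T (t : ℕ)) (hgm t) z
    filter_upwards [hbdd t] with z hz
    show max (-L) (min L (h t z.2)) = g t z
    rw [← hfac z, min_eq_right (abs_le.mp hz).2, max_eq_right (abs_le.mp hz).1]
  have hbullet2 : ∀ t : Fin T,
      (fun z : PathSp T × PathSp T => b t z.2) =ᵐ[π]
        π[fun z : PathSp T × PathSp T => a t z.1 | prodY T T] :=
    fun t => (hbeq t).trans (hstep3 t).symm
  -- Jensen part via the conditional expectation kernel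
  set F : PathSp T × PathSp T → ℝ := fun z => f z.2 (fun t => a t z.1) with hFdef
  set κ := condExpKernel π (prodY T T) with hκdef
  have hamble : ∀ t : Fin T, Measurable (fun z : PathSp T × PathSp T => a t z.1) :=
    fun t => ((ha t).1.mono (BCPaux.FX_le T (t : ℕ)) le_rfl).comp measurable_fst
  have haInt : ∀ t : Fin T, Integrable (fun z : PathSp T × PathSp T => a t z.1) π :=
    fun t => BCPaux.integrable_comp_of_bound π measurable_fst
      ((ha t).1.mono (BCPaux.FX_le T (t : ℕ)) le_rfl)
      (fun x => by simpa [Real.norm_eq_abs] using (ha t).2 x)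
  have h1 : π[F | prodY T T] =ᵐ[π] fun z => ∫ w, F w ∂κ z :=
    condExp_ae_eq_integral_condExpKernel hmT hint1
  have h2 : ∀ t : Fin T,
      (π[fun z : PathSp T × PathSp T => a t z.1 | prodY T T]) =ᵐ[π]
        fun z => ∫ w, a t w.1 ∂κ z :=
    fun t => condExp_ae_eq_integral_condExpKernel hmT (haInt t)
  have hvec : ∀ᵐ z ∂π, ∀ t : Fin T, b t z.2 = ∫ w, a t w.1 ∂κ z :=
    ae_all_iff.mpr fun t => ((hbeq t).trans ((hstep3 t).symm.trans (h2 t)))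
  have h3 : ∀ᵐ z ∂π, Integrable F (κ z) := hint1.condExpKernel_ae
  -- the kernel is supported on {w | w.2 = z.2}
  have hsm : ∀ (i : Fin T) (q : ℚ),
      MeasurableSet[prodY T T] {w : PathSp T × PathSp T | w.2 i ≤ (q : ℝ)} := by
    intro i q
    exact ⟨{y : PathSp T | y i ≤ (q : ℝ)}, (BCPaux.measurable_coord T i) measurableSet_Iic, rfl⟩
  have hker : ∀ᵐ z ∂π, ∀ (i : Fin T) (q : ℚ),
      (κ z {w : PathSp T × PathSp T | w.2 i ≤ (q : ℝ)}).toReal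
        = ({w : PathSp T × PathSp T | w.2 i ≤ (q : ℝ)}).indicator (fun _ => (1:ℝ)) z := by
    rw [ae_all_iff]; intro i; rw [ae_all_iff]; intro q
    have hs0 : MeasurableSet {w : PathSp T × PathSp T | w.2 i ≤ (q : ℝ)} := hmT _ (hsm i q)
    have hind := condExpKernel_ae_eq_condExp (μ := π) hmT hs0
    have hsmm : StronglyMeasurable[prodY T T]
        (({w : PathSp T × PathSp T | w.2 i ≤ (q : ℝ)}).indicator (fun _ => (1:ℝ))) :=
      stronglyMeasurable_const.indicator (hsm i q)
    have hintind : Integrable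
        (({w : PathSp T × PathSp T | w.2 i ≤ (q : ℝ)}).indicator (fun _ => (1:ℝ))) π := by
      refine (integrable_const (1:ℝ)).mono' ((hsmm.mono hmT).aestronglyMeasurable) ?_
      filter_upwards with z
      by_cases hzs : z ∈ {w : PathSp T × PathSp T | w.2 i ≤ (q : ℝ)} <;>
        simp [Set.indicator_of_mem, Set.indicator_of_notMem, hzs]
    have heq := condExp_of_stronglyMeasurable hmT hsmm hintind
    filter_upwards [hind] with z hz
    show ((condExpKernel π (prodY T T)) z).real _ = _
    rw [hz, heq]
  have h4 : ∀ᵐ z ∂π, ∀ᵐ w ∂κ z, w.2 = z.2 := by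
    filter_upwards [hker] with z hz
    haveI : IsProbabilityMeasure (κ z) := by
      rw [hκdef]; infer_instance
    set bad : Fin T → ℚ → Set (PathSp T × PathSp T) := fun i q =>
      if z.2 i ≤ (q : ℝ) then {w | (q : ℝ) < w.2 i} else {w | w.2 i ≤ (q : ℝ)} with hbad
    have hbadnull : ∀ i q, κ z (bad i q) = 0 := by
      intro i q
      by_cases hle : z.2 i ≤ (q : ℝ)
      · have h1 : κ z {w : PathSp T × PathSp T | w.2 i ≤ (q : ℝ)} = 1 := by
          have hin : z ∈ {w : PathSp T × PathSp T | w.2 i ≤ (q : ℝ)} := hle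
          rw [← ENNReal.toReal_eq_one_iff, hz i q, Set.indicator_of_mem hin]
        have h2 : κ z ({w : PathSp T × PathSp T | w.2 i ≤ (q : ℝ)})ᶜ = 0 :=
          (prob_compl_eq_zero_iff (hmT _ (hsm i q))).mpr h1
        simp only [hbad, if_pos hle]
        refine measure_mono_null ?_ h2
        intro w hw
        simp only [Set.mem_setOf_eq] at hw
        exact not_le.mpr hw
      · have h1 : κ z {w : PathSp T × PathSp T | w.2 i ≤ (q : ℝ)} = 0 := by
          have hthis := hz i q
          have hnin : z ∉ {w : PathSp T × PathSp T | w.2 i ≤ (q : ℝ)} := hle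
          have h0 : ({w : PathSp T × PathSp T | w.2 i ≤ (q : ℝ)}).indicator
              (fun _ => (1:ℝ)) z = 0 := Set.indicator_of_notMem hnin _
          rw [h0] at hthis
          rcases (ENNReal.toReal_eq_zero_iff _).mp hthis with h | h
          · exact h
          · exact absurd h (measure_ne_top _ _)
        simp only [hbad, if_neg hle]
        exact h1
    rw [ae_iff]
    refine measure_mono_null ?_
      (measure_iUnion_null fun i => measure_iUnion_null fun q => hbadnull i q)
    intro w hw
    simp only [Set.mem_setOf_eq] at hw
    obtain ⟨i, hi⟩ := Function.ne_iff.mp hw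
    rcases lt_or_gt_of_ne hi with hlt | hgt
    · -- w.2 i < z.2 i
      obtain ⟨q, hq1, hq2⟩ := exists_rat_btwn hlt
      refine Set.mem_iUnion.mpr ⟨i, Set.mem_iUnion.mpr ⟨q, ?_⟩⟩
      simp only [hbad, if_neg (not_le.mpr hq2)]
      exact le_of_lt hq1
    · -- z.2 i < w.2 i
      obtain ⟨q, hq1, hq2⟩ := exists_rat_btwn hgt
      refine Set.mem_iUnion.mpr ⟨i, Set.mem_iUnion.mpr ⟨q, ?_⟩⟩
      simp only [hbad, if_pos (le_of_lt hq1)]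
      exact hq2
  -- main pointwise inequality
  have hmain : ∀ᵐ z ∂π, f z.2 (fun t => b t z.2) ≤ (π[F | prodY T T]) z := by
    filter_upwards [h1, hvec, h3, h4] with z hz1 hz2 hz3 hz4
    haveI : IsProbabilityMeasure (κ z) := by
      rw [hκdef]; infer_instance
    have hvint : Integrable (fun w : PathSp T × PathSp T => (fun t : Fin T => a t w.1)) (κ z) := by
      refine (integrable_const (μ := κ z) L).mono'
        ((measurable_pi_lambda _ fun t => hamble t).aestronglyMeasurable) ?_
      filter_upwards with w
      rw [pi_norm_le_iff_of_nonneg hL.le]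
      intro t
      simpa [Real.norm_eq_abs] using (ha t).2 w.1
    have hcongr : (fun w : PathSp T × PathSp T => f z.2 (fun t => a t w.1)) =ᵐ[κ z] F := by
      filter_upwards [hz4] with w hw
      show f z.2 _ = f w.2 _
      rw [hw]
    have hgint : Integrable (fun w : PathSp T × PathSp T => f z.2 (fun t => a t w.1)) (κ z) :=
      hz3.congr hcongr.symm
    have hcont : ContinuousOn (f z.2) Set.univ :=
      (hfcont.comp (continuous_const.prodMk continuous_id)).continuousOn
    have hjen := (hconv z.2).map_integral_le hcont isClosed_univ
      (Eventually.of_forall fun w => Set.mem_univ _) hvint hgint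
    have hcoord : (fun t : Fin T => b t z.2)
        = ∫ w, (fun t : Fin T => a t w.1) ∂κ z := by
      funext t
      calc b t z.2 = ∫ w, a t w.1 ∂κ z := hz2 t
        _ = (ContinuousLinearMap.proj (R := ℝ) (φ := fun _ : Fin T => ℝ) t)
            (∫ w, (fun t : Fin T => a t w.1) ∂κ z) :=
          ((ContinuousLinearMap.proj (R := ℝ) (φ := fun _ : Fin T => ℝ)
            t).integral_comp_comm hvint)
        _ = (∫ w, (fun t : Fin T => a t w.1) ∂κ z) t := rfl
    calc f z.2 (fun t => b t z.2)
        = f z.2 (∫ w, (fun t : Fin T => a t w.1) ∂κ z) := by rw [hcoord]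
      _ ≤ ∫ w, f z.2 (fun t : Fin T => a t w.1) ∂κ z := hjen
      _ = ∫ w, F w ∂κ z := integral_congr_ae hcongr
      _ = (π[F | prodY T T]) z := hz1.symm
  -- conclusion
  have hQ : Q = π.map Prod.snd := hπ.2.symm
  have hbm' : ∀ t : Fin T, Measurable (b t) := fun t => (hbm t).mono (BCPaux.FX_le T _) le_rfl
  have hmeasb : Measurable fun y : PathSp T => f y (fun t => b t y) := by
    have hpair : Measurable fun y : PathSp T => (y, fun t : Fin T => b t y) :=
      measurable_id.prodMk (measurable_pi_lambda _ fun t => hbm' t)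
    exact hfcont.measurable.comp hpair
  have h5 : ∫ y, f y (fun t => b t y) ∂Q
      = ∫ z : PathSp T × PathSp T, f z.2 (fun t => b t z.2) ∂π := by
    rw [hQ]
    exact integral_map measurable_snd.aemeasurable hmeasb.aestronglyMeasurable
  have hbint : Integrable (fun z : PathSp T × PathSp T => f z.2 (fun t => b t z.2)) π := by
    have hb2 := hint2 b hbpred
    rw [hQ] at hb2
    exact (integrable_map_measure hmeasb.aestronglyMeasurable measurable_snd.aemeasurable).mp hb2
  refine ⟨b, hbpred, hbullet2, ?_⟩
  calc ∫ y, f y (fun t => b t y) ∂Q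
      = ∫ z : PathSp T × PathSp T, f z.2 (fun t => b t z.2) ∂π := h5
    _ ≤ ∫ z, (π[F | prodY T T]) z ∂π := integral_mono_ae hbint integrable_condExp hmain
    _ = ∫ z, F z ∂π := integral_condExp hmT

end
end
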